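/- arXiv:1811.05837 — 2 statements merged into one kernel-verified Lean document; each statement's English description precedes it below -/
import Mathlib

section
/- Let (B_n)_{n∈ℕ} be a sequence of m×m real-matrix-valued functions on ℝ, each a stationary covariance matrix function on ℝ, and suppose Σ_{n=0}^∞ B_n(0)·P_n(1) converges entrywise. Then for all x₁, x₂ ∈ S^d and t₁, t₂ ∈ ℝ, the series K((x₁,t₁),(x₂,t₂)) = Σ_{n=0}^∞ B_n(t₁−t₂)·P_n(⟨x₁,x₂⟩) converges entrywise absolutely, and K is a covariance matrix kernel on S^d × ℝ: K((x₁,t₁),(x₂,t₂))ᵀ = K((x₂,t₂),(x₁,t₁)) and Σ_{i=1}^k Σ_{j=1}^k aᵢᵀ·K((xᵢ,tᵢ),(xⱼ,tⱼ))·aⱼ ≥ 0 for every k ∈ ℕ, all (xᵢ,tᵢ) ∈ S^d × ℝ and all aᵢ ∈ ℝ^m. -/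
open MeasureTheory ProbabilityTheory Filter
open scoped RealInnerProductSpace ENNReal NNReal BigOperators

noncomputable section

/-- The Jacobi polynomial `P_n^{(a,b)}(x)`. -/
def jacobiP (a b : ℝ) (n : ℕ) (x : ℝ) : ℝ :=
  Real.Gamma (a + n + 1) / (n.factorial * Real.Gamma (a + b + n + 1)) *
    ∑ k ∈ Finset.range (n + 1),
      (n.choose k : ℝ) * (Real.Gamma (a + b + n + k + 1) / Real.Gamma (a + k + 1)) *
        ((x - 1) / 2) ^ k

/-- Euclidean space `ℝ^{d+1}`. -/
abbrev EucSp (d : ℕ) := EuclideanSpace ℝ (Fin (d + 1))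

/-- The unit sphere `S^d ⊂ ℝ^{d+1}`. -/
abbrev Sph (d : ℕ) := Metric.sphere (0 : EucSp d) 1

/-- The rotation-invariant surface measure on `S^d`
(the `d`-dimensional Hausdorff measure). -/
def sphMeasure (d : ℕ) : Measure (Sph d) := μH[d]

/-- The geodesic distance on the sphere. -/
def sphDist (d : ℕ) (x y : Sph d) : ℝ :=
  Real.arccos ⟪(x : EucSp d), (y : EucSp d)⟫

/-- The normalizing constant `a_n`. -/
def aCoef (a b : ℝ) (n : ℕ) : ℝ :=
  Real.sqrt (Real.Gamma (b + 1) * (2 * n + a + b + 1) * Real.Gamma (n + a + b + 1) /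
    (Real.Gamma (a + b + 2) * Real.Gamma (n + b + 1)))

/-- Convergence of the series `Σ_{n=0}^∞ f n` to the limit `L`. -/
def SeriesConv (f : ℕ → ℝ) (L : ℝ) : Prop :=
  Filter.Tendsto (fun N => ∑ n ∈ Finset.range N, f n) Filter.atTop (nhds L)

/-- The covariance matrix `Cov(X,Y) = E[(X−E X)(Y−E Y)ᵀ]` of two square-integrable
random vectors. -/
def covM {Ω : Type*} [MeasureSpace Ω] {m : ℕ}
    (X Y : Ω → EuclideanSpace ℝ (Fin m)) : Matrix (Fin m) (Fin m) ℝ :=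
  Matrix.of fun i j => ∫ ω, (X ω i - ∫ ω', X ω' i) * (Y ω j - ∫ ω', Y ω' j)

/-- A stationary covariance matrix function on the temporal domain `T`. -/
def StationaryCov {T : Type*} [Neg T] [Sub T] {m : ℕ}
    (B : T → Matrix (Fin m) (Fin m) ℝ) : Prop :=
  (∀ t, B (-t) = (B t).transpose) ∧
  ∀ (k : ℕ) (t : Fin k → T) (a : Fin k → Fin m → ℝ),
    0 ≤ ∑ i, ∑ j, dotProduct (a i) ((B (t i - t j)).mulVec (a j))

namespace JacobiPSD
open MvPolynomial Finset

variable {N : ℕ}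

/-- weight `α! = ∏ (α i)!` -/
def wt (a : Fin N →₀ ℕ) : ℝ := ∏ i, ((a i).factorial : ℝ)

lemma wt_pos (a : Fin N →₀ ℕ) : 0 < wt a :=
  Finset.prod_pos fun i _ => by exact_mod_cast (a i).factorial_pos

/-- The Fischer bilinear form. -/
def FF (p q : MvPolynomial (Fin N) ℝ) : ℝ :=
  ∑ a ∈ p.support, wt a * p.coeff a * q.coeff a

lemma FF_eq_sum {p : MvPolynomial (Fin N) ℝ} (q : MvPolynomial (Fin N) ℝ)
    {S : Finset (Fin N →₀ ℕ)} (hS : p.support ⊆ S) :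
    FF p q = ∑ a ∈ S, wt a * p.coeff a * q.coeff a := by
  refine Finset.sum_subset hS fun a _ ha => ?_
  rw [MvPolynomial.notMem_support_iff] at ha
  simp [ha]

lemma FF_comm (p q : MvPolynomial (Fin N) ℝ) : FF p q = FF q p := by
  rw [FF_eq_sum (p := p) q (S := p.support ∪ q.support) Finset.subset_union_left,
      FF_eq_sum (p := q) p (S := p.support ∪ q.support) Finset.subset_union_right]
  exact Finset.sum_congr rfl fun a _ => by ring

lemma FF_add_right (p q r : MvPolynomial (Fin N) ℝ) :
    FF p (q + r) = FF p q + FF p r := by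
  unfold FF
  rw [← Finset.sum_add_distrib]
  exact Finset.sum_congr rfl fun a _ => by rw [coeff_add]; ring

lemma FF_smul_right (c : ℝ) (p q : MvPolynomial (Fin N) ℝ) :
    FF p (c • q) = c * FF p q := by
  unfold FF
  rw [Finset.mul_sum]
  exact Finset.sum_congr rfl fun a _ => by rw [coeff_smul]; simp; ring

lemma FF_zero_right (p : MvPolynomial (Fin N) ℝ) : FF p 0 = 0 := by
  unfold FF; simp

lemma FF_sum_right {ι : Type*} (s : Finset ι) (p : MvPolynomial (Fin N) ℝ)
    (f : ι → MvPolynomial (Fin N) ℝ) :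
    FF p (∑ i ∈ s, f i) = ∑ i ∈ s, FF p (f i) := by
  induction s using Finset.cons_induction with
  | empty => simp [FF_zero_right]
  | cons i s hi ih => rw [Finset.sum_cons, Finset.sum_cons, FF_add_right, ih]

lemma FF_add_left (p q r : MvPolynomial (Fin N) ℝ) :
    FF (p + q) r = FF p r + FF q r := by
  rw [FF_comm, FF_add_right, FF_comm r p, FF_comm r q]

lemma FF_smul_left (c : ℝ) (p q : MvPolynomial (Fin N) ℝ) :
    FF (c • p) q = c * FF p q := by
  rw [FF_comm, FF_smul_right, FF_comm]

lemma FF_zero_left (q : MvPolynomial (Fin N) ℝ) : FF 0 q = 0 := by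
  rw [FF_comm, FF_zero_right]

lemma FF_sum_left {ι : Type*} (s : Finset ι) (q : MvPolynomial (Fin N) ℝ)
    (f : ι → MvPolynomial (Fin N) ℝ) :
    FF (∑ i ∈ s, f i) q = ∑ i ∈ s, FF (f i) q := by
  rw [FF_comm, FF_sum_right]
  exact Finset.sum_congr rfl fun i _ => FF_comm _ _

lemma FF_C_mul_left (c : ℝ) (p q : MvPolynomial (Fin N) ℝ) :
    FF (C c * p) q = c * FF p q := by rw [C_mul', FF_smul_left]

lemma FF_C_mul_right (c : ℝ) (p q : MvPolynomial (Fin N) ℝ) :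
    FF p (C c * q) = c * FF p q := by rw [C_mul', FF_smul_right]

lemma FF_one_left (q : MvPolynomial (Fin N) ℝ) : FF 1 q = q.coeff 0 := by
  have h1 : (1 : MvPolynomial (Fin N) ℝ).support ⊆ {0} := by
    intro a ha
    rw [MvPolynomial.mem_support_iff] at ha
    simp only [Finset.mem_singleton]
    by_contra hne
    exact ha (by rw [← C_1, coeff_C, if_neg (fun h => hne h.symm)])
  rw [FF_eq_sum q h1, Finset.sum_singleton]
  have : wt (0 : Fin N →₀ ℕ) = 1 := by unfold wt; simp
  simp [this]

lemma wt_add_single (a : Fin N →₀ ℕ) (i : Fin N) :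
    wt (a + Finsupp.single i 1) = ((a i : ℝ) + 1) * wt a := by
  unfold wt
  rw [← Finset.mul_prod_erase _ _ (Finset.mem_univ i),
      ← Finset.mul_prod_erase _ (fun j => ((a j).factorial : ℝ)) (Finset.mem_univ i)]
  have h1 : ((a + Finsupp.single i 1 : Fin N →₀ ℕ) i).factorial = (a i + 1) * (a i).factorial := by
    simp [Nat.factorial_succ]
  have h2 : ∀ j ∈ Finset.univ.erase i,
      (((a + Finsupp.single i 1 : Fin N →₀ ℕ) j).factorial : ℝ) = ((a j).factorial : ℝ) := by
    intro j hj
    have hne : j ≠ i := (Finset.mem_erase.mp hj).1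
    simp [Finsupp.single_apply, hne.symm]
  rw [Finset.prod_congr rfl h2, h1]
  push_cast
  ring

lemma coeff_pderiv (i : Fin N) (b : Fin N →₀ ℕ) (q : MvPolynomial (Fin N) ℝ) :
    coeff b (pderiv i q) = ((b i : ℝ) + 1) * coeff (b + Finsupp.single i 1) q := by
  induction q using MvPolynomial.induction_on' with
  | monomial s c =>
    rw [pderiv_monomial, coeff_monomial, coeff_monomial]
    rcases eq_or_ne s (b + Finsupp.single i 1) with h | h
    · subst h
      rw [if_pos (add_tsub_cancel_right _ _), if_pos rfl]
      have hbi : ((b + Finsupp.single i 1 : Fin N →₀ ℕ) i : ℕ) = b i + 1 := by simp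
      rw [hbi]; push_cast; ring
    · rw [if_neg h]
      rcases Nat.eq_zero_or_pos (s i) with hs | hs
      · rcases eq_or_ne (s - Finsupp.single i 1) b with h2 | h2
        · rw [if_pos h2, hs]; simp
        · rw [if_neg h2]; ring
      · have h3 : s - Finsupp.single i 1 ≠ b := by
          intro h2
          exact h (by rw [← tsub_add_cancel_of_le (Finsupp.single_le_iff.mpr (by omega : 1 ≤ s i) : Finsupp.single i 1 ≤ s), h2])
        rw [if_neg h3]; ring
  | add p q hp hq => rw [map_add, coeff_add, coeff_add, hp, hq]; ring

lemma FF_X_mul (i : Fin N) (p q : MvPolynomial (Fin N) ℝ) :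
    FF (X i * p) q = FF p (pderiv i q) := by
  unfold FF
  rw [support_X_mul, Finset.sum_map]
  refine Finset.sum_congr rfl fun b _ => ?_
  have h1 : (addLeftEmbedding (Finsupp.single i 1)) b = Finsupp.single i 1 + b := rfl
  rw [h1, coeff_X_mul, add_comm (Finsupp.single i 1) b, wt_add_single, coeff_pderiv]
  ring

lemma FF_nonneg (p : MvPolynomial (Fin N) ℝ) : 0 ≤ FF p p := by
  refine Finset.sum_nonneg fun a _ => ?_
  have := wt_pos a
  nlinarith [sq_nonneg (p.coeff a)]


/-- dot product of coordinate vectors -/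
def dot (x y : Fin N → ℝ) : ℝ := ∑ i, x i * y i

/-- linear form `⟨y, u⟩` -/
def lin (y : Fin N → ℝ) : MvPolynomial (Fin N) ℝ := ∑ i, C (y i) * X i

/-- squared norm `|u|²` -/
def Qp (N : ℕ) : MvPolynomial (Fin N) ℝ := ∑ i, X i ^ 2

/-- Laplacian -/
def lapl (q : MvPolynomial (Fin N) ℝ) : MvPolynomial (Fin N) ℝ :=
  ∑ i, pderiv i (pderiv i q)

/-- directional derivative `Σ yᵢ ∂ᵢ` -/
def dop (y : Fin N → ℝ) (q : MvPolynomial (Fin N) ℝ) : MvPolynomial (Fin N) ℝ :=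
  ∑ i, C (y i) * pderiv i q

lemma FF_Q_mul (p q : MvPolynomial (Fin N) ℝ) :
    FF (Qp N * p) q = FF p (lapl q) := by
  unfold Qp lapl
  rw [Finset.sum_mul, FF_sum_left, FF_sum_right]
  refine Finset.sum_congr rfl fun i _ => ?_
  rw [show (X i ^ 2 * p : MvPolynomial (Fin N) ℝ) = X i * (X i * p) by ring,
      FF_X_mul, FF_X_mul]

lemma FF_L_mul (y : Fin N → ℝ) (p q : MvPolynomial (Fin N) ℝ) :
    FF (lin y * p) q = FF p (dop y q) := by
  unfold lin dop
  rw [Finset.sum_mul, FF_sum_left, FF_sum_right]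
  refine Finset.sum_congr rfl fun i _ => ?_
  rw [mul_assoc, FF_C_mul_left, FF_X_mul, FF_C_mul_right]

lemma FF_Qpow_mul (k : ℕ) (p q : MvPolynomial (Fin N) ℝ) :
    FF (Qp N ^ k * p) q = FF p (lapl^[k] q) := by
  induction k generalizing p q with
  | zero => simp
  | succ k ih =>
    rw [show (Qp N ^ (k+1) * p : MvPolynomial (Fin N) ℝ) = Qp N ^ k * (Qp N * p) by ring,
        ih, FF_Q_mul, Function.iterate_succ_apply']

lemma FF_Lpow_mul (y : Fin N → ℝ) (k : ℕ) (p q : MvPolynomial (Fin N) ℝ) :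
    FF (lin y ^ k * p) q = FF p ((dop y)^[k] q) := by
  induction k generalizing p q with
  | zero => simp
  | succ k ih =>
    rw [show (lin y ^ (k+1) * p : MvPolynomial (Fin N) ℝ) = lin y ^ k * (lin y * p) by ring,
        ih, FF_L_mul, Function.iterate_succ_apply']

lemma FF_Lpow (y : Fin N → ℝ) (k : ℕ) (q : MvPolynomial (Fin N) ℝ) :
    FF (lin y ^ k) q = coeff 0 ((dop y)^[k] q) := by
  rw [show (lin y ^ k : MvPolynomial (Fin N) ℝ) = lin y ^ k * 1 by ring, FF_Lpow_mul,
      FF_one_left]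

/- ## derivative computations -/

lemma pderiv_lin (i : Fin N) (y : Fin N → ℝ) : pderiv i (lin y) = C (y i) := by
  unfold lin
  rw [map_sum]
  rw [Finset.sum_eq_single i]
  · rw [pderiv_C_mul, pderiv_X_self, mul_one]
  · intro j _ hj
    rw [pderiv_C_mul, pderiv_X_of_ne hj, mul_zero]
  · intro h; exact absurd (Finset.mem_univ i) h

lemma pderiv_Qp (i : Fin N) : pderiv i (Qp N) = C 2 * X i := by
  unfold Qp
  rw [map_sum]
  rw [Finset.sum_eq_single i]
  · rw [pderiv_pow, pderiv_X_self, mul_one, pow_one]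
    congr 1
  · intro j _ hj
    rw [pderiv_pow, pderiv_X_of_ne hj, mul_zero]
  · intro h; exact absurd (Finset.mem_univ i) h

lemma pderiv_lin_pow (i : Fin N) (y : Fin N → ℝ) (r : ℕ) :
    pderiv i (lin y ^ r) = C ((r : ℝ) * y i) * lin y ^ (r - 1) := by
  rw [pderiv_pow, pderiv_lin]
  rw [show ((r : MvPolynomial (Fin N) ℝ)) = C (r : ℝ) by simp, C_mul]; ring

lemma pderiv_Qp_pow (i : Fin N) (k : ℕ) :
    pderiv i (Qp N ^ k) = C (2 * (k : ℝ)) * (Qp N ^ (k - 1) * X i) := by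
  rw [pderiv_pow, pderiv_Qp]
  rw [show ((k : MvPolynomial (Fin N) ℝ)) = C (k : ℝ) by simp, C_mul]; ring

lemma lapl_C_mul (c : ℝ) (p : MvPolynomial (Fin N) ℝ) :
    lapl (C c * p) = C c * lapl p := by
  unfold lapl
  rw [Finset.mul_sum]
  exact Finset.sum_congr rfl fun i _ => by rw [pderiv_C_mul, pderiv_C_mul]

lemma lapl_zero : lapl (0 : MvPolynomial (Fin N) ℝ) = 0 := by
  unfold lapl; simp

lemma dop_C_mul (y : Fin N → ℝ) (c : ℝ) (p : MvPolynomial (Fin N) ℝ) :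
    dop y (C c * p) = C c * dop y p := by
  unfold dop
  rw [Finset.mul_sum]
  exact Finset.sum_congr rfl fun i _ => by rw [pderiv_C_mul]; ring

lemma dot_comm (x y : Fin N → ℝ) : dot x y = dot y x := by
  unfold dot; exact Finset.sum_congr rfl fun i _ => mul_comm _ _

lemma dop_lin_pow (x y : Fin N → ℝ) (r : ℕ) :
    dop x (lin y ^ r) = C ((r : ℝ) * dot x y) * lin y ^ (r - 1) := by
  unfold dop
  have h : ∀ i : Fin N, C (x i) * pderiv i (lin y ^ r)
      = C ((r : ℝ) * (x i * y i)) * lin y ^ (r - 1) := by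
    intro i
    rw [pderiv_lin_pow, ← mul_assoc, ← C_mul]
    congr 2
    ring
  rw [Finset.sum_congr rfl fun i _ => h i, ← Finset.sum_mul, ← map_sum]
  congr 2
  unfold dot
  rw [← Finset.mul_sum]

lemma lapl_lin_pow (y : Fin N → ℝ) (r : ℕ) :
    lapl (lin y ^ r) = C ((r : ℝ) * ((r : ℝ) - 1) * dot y y) * lin y ^ (r - 2) := by
  match r with
  | 0 => simp [lapl_zero, lapl]
  | 1 =>
    unfold lapl
    have : ∀ i : Fin N, pderiv i (pderiv i ((lin y) ^ 1)) = 0 := by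
      intro i
      rw [pow_one, pderiv_lin, pderiv_C]
    rw [Finset.sum_congr rfl fun i _ => this i]
    simp
  | (m + 2) =>
    unfold lapl
    have h : ∀ i : Fin N, pderiv i (pderiv i (lin y ^ (m + 2)))
        = C (((m:ℝ)+2) * ((m:ℝ)+1) * (y i * y i)) * lin y ^ m := by
      intro i
      rw [pderiv_lin_pow, pderiv_C_mul, pderiv_lin_pow]
      rw [show (m + 2 - 1 : ℕ) = m + 1 by omega, show (m + 1 - 1 : ℕ) = m by omega]
      rw [← mul_assoc, ← C_mul]
      congr 2
      push_cast
      ring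
    rw [Finset.sum_congr rfl fun i _ => h i, ← Finset.sum_mul, ← map_sum]
    rw [show (m + 2 - 2 : ℕ) = m by omega]
    congr 2
    unfold dot
    rw [← Finset.mul_sum]
    push_cast
    ring


lemma lapl_mul (p q : MvPolynomial (Fin N) ℝ) :
    lapl (p * q) = lapl p * q + 2 * ∑ i, pderiv i p * pderiv i q + p * lapl q := by
  unfold lapl
  rw [Finset.sum_mul, Finset.mul_sum, Finset.mul_sum, ← Finset.sum_add_distrib,
      ← Finset.sum_add_distrib]
  refine Finset.sum_congr rfl fun i _ => ?_
  rw [pderiv_mul, map_add, pderiv_mul, pderiv_mul]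
  ring

lemma C_merge (a b c : ℝ) (h : a * b = c) (p : MvPolynomial (Fin N) ℝ) :
    C a * (C b * p) = C c * p := by rw [← mul_assoc, ← C_mul, h]

lemma lapl_Qp_pow (k : ℕ) :
    lapl (Qp N ^ k) = C (2*(k:ℝ)*(2*(k:ℝ) + (N:ℝ) - 2)) * Qp N ^ (k-1) := by
  match k with
  | 0 => simp [lapl_zero, lapl]
  | 1 =>
    unfold lapl
    have h : ∀ i : Fin N, pderiv i (pderiv i (Qp N ^ 1)) = C 2 := by
      intro i
      rw [pow_one, pderiv_Qp, pderiv_C_mul, pderiv_X_self, mul_one]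
    rw [Finset.sum_congr rfl fun i _ => h i, Finset.sum_const, Finset.card_univ,
        Fintype.card_fin, nsmul_eq_mul]
    rw [show ((N : MvPolynomial (Fin N) ℝ)) = C (N:ℝ) by simp]
    rw [pow_zero, mul_one, ← C_mul]
    congr 1
    ring
  | (j + 2) =>
    unfold lapl
    have h : ∀ i : Fin N, pderiv i (pderiv i (Qp N ^ (j+2)))
        = C (4*((j:ℝ)+2)*((j:ℝ)+1)) * (Qp N ^ j * (X i)^2) + C (2*((j:ℝ)+2)) * Qp N ^ (j+1) := by
      intro i
      rw [pderiv_Qp_pow, pderiv_C_mul, pderiv_mul, pderiv_Qp_pow, pderiv_X_self,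
          show (j + 2 - 1 : ℕ) = j + 1 by omega, show (j + 1 - 1 : ℕ) = j by omega]
      push_cast
      trans (C (2*((j:ℝ)+2)) * C (2*((j:ℝ)+1)) * (Qp N ^ j * (X i)^2)
          + C (2*((j:ℝ)+2)) * Qp N ^ (j+1))
      · ring
      · rw [← C_mul, show (2*((j:ℝ)+2)) * (2*((j:ℝ)+1)) = 4*((j:ℝ)+2)*((j:ℝ)+1) by ring]
    rw [Finset.sum_congr rfl fun i _ => h i, Finset.sum_add_distrib, ← Finset.mul_sum,
        ← Finset.mul_sum, Finset.sum_const, Finset.card_univ, Fintype.card_fin, nsmul_eq_mul,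
        show (∑ i : Fin N, (X i)^2 : MvPolynomial (Fin N) ℝ) = Qp N from rfl,
        show (j + 2 - 1 : ℕ) = j + 1 by omega,
        show ((N : MvPolynomial (Fin N) ℝ)) = C (N:ℝ) by simp]
    trans ((C (4*((j:ℝ)+2)*((j:ℝ)+1)) + C (N:ℝ) * C (2*((j:ℝ)+2))) * Qp N ^ (j+1))
    · ring
    · rw [← C_mul, ← C_add]
      congr 1
      push_cast
      ring

lemma cross_QL (x : Fin N → ℝ) (k m : ℕ) :
    ∑ i, pderiv i (Qp N ^ k) * pderiv i (lin x ^ m)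
      = C (2*(k:ℝ)*(m:ℝ)) * (Qp N ^ (k-1) * lin x ^ m) := by
  have h : ∀ i : Fin N, pderiv i (Qp N ^ k) * pderiv i (lin x ^ m)
      = C (2*(k:ℝ)*(m:ℝ)) * (Qp N ^ (k-1) * lin x ^ (m-1)) * (C (x i) * X i) := by
    intro i
    rw [pderiv_Qp_pow, pderiv_lin_pow]
    trans (C (2*(k:ℝ)) * C ((m:ℝ) * x i) * (Qp N ^ (k-1) * lin x ^ (m-1) * X i))
    · ring
    · rw [← C_mul, show 2*(k:ℝ) * ((m:ℝ) * x i) = (2*(k:ℝ)*(m:ℝ)) * x i by ring, C_mul]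
      ring
  rw [Finset.sum_congr rfl fun i _ => h i, ← Finset.mul_sum,
      show (∑ i : Fin N, (C (x i) * X i) : MvPolynomial (Fin N) ℝ) = lin x from rfl]
  match m with
  | 0 => simp
  | (m' + 1) =>
    rw [show (m' + 1 - 1 : ℕ) = m' by omega]
    ring

lemma lapl_mul_QL (x : Fin N → ℝ) (k m : ℕ) :
    lapl (Qp N ^ k * lin x ^ m)
      = C (2*(k:ℝ)*(2*(k:ℝ) + (N:ℝ) - 2 + 2*(m:ℝ))) * (Qp N ^ (k-1) * lin x ^ m)
        + C ((m:ℝ)*((m:ℝ)-1) * dot x x) * (Qp N ^ k * lin x ^ (m-2)) := by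
  rw [lapl_mul, lapl_Qp_pow, lapl_lin_pow, cross_QL]
  trans ((C (2*(k:ℝ)*(2*(k:ℝ) + (N:ℝ) - 2)) + 2 * C (2*(k:ℝ)*(m:ℝ))) * (Qp N ^ (k-1) * lin x ^ m)
      + C ((m:ℝ)*((m:ℝ)-1) * dot x x) * (Qp N ^ k * lin x ^ (m-2)))
  · ring
  · rw [show ((2:MvPolynomial (Fin N) ℝ)) = C 2 from (map_ofNat C 2).symm, ← C_mul, ← C_add,
        show 2*(k:ℝ)*(2*(k:ℝ) + (N:ℝ) - 2) + 2 * (2*(k:ℝ)*(m:ℝ))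
          = 2*(k:ℝ)*(2*(k:ℝ) + (N:ℝ) - 2 + 2*(m:ℝ)) by ring]


/-- Gegenbauer-type coefficients -/
def mu (n : ℕ) (A : ℝ) : ℕ → ℝ
  | 0 => 1
  | (k+1) => -((((n:ℝ) - 2*k) * ((n:ℝ) - 2*k - 1)) /
      (2*((k:ℝ)+1) * (2*(n:ℝ) - 2*(k:ℝ) + 2*A - 1))) * mu n A k

lemma mu_rec (n : ℕ) (A : ℝ) (k : ℕ) (h : 2*(n:ℝ) - 2*(k:ℝ) + 2*A - 1 ≠ 0) :
    2*((k:ℝ)+1) * (2*(n:ℝ) - 2*(k:ℝ) + 2*A - 1) * mu n A (k+1)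
      + ((n:ℝ) - 2*k) * ((n:ℝ) - 2*k - 1) * mu n A k = 0 := by
  rw [mu]
  have hk : ((k:ℝ) + 1) ≠ 0 := by positivity
  have hD2 : 2*((k:ℝ)+1) * (2*(n:ℝ) - 2*(k:ℝ) + 2*A - 1) ≠ 0 :=
    mul_ne_zero (mul_ne_zero two_ne_zero hk) h
  have hc : 2*((k:ℝ)+1) * (2*(n:ℝ) - 2*(k:ℝ) + 2*A - 1) *
      ((((n:ℝ) - 2*k) * ((n:ℝ) - 2*k - 1)) / (2*((k:ℝ)+1) * (2*(n:ℝ) - 2*(k:ℝ) + 2*A - 1)))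
      = ((n:ℝ) - 2*k) * ((n:ℝ) - 2*k - 1) := by
    rw [mul_div_assoc', mul_comm, mul_div_assoc, div_self hD2, mul_one]
  linear_combination (-mu n A k) * hc

/-- the harmonic projection of `⟨x,u⟩^n` (for `|x| = 1`) -/
def hpol (N n : ℕ) (A : ℝ) (x : Fin N → ℝ) : MvPolynomial (Fin N) ℝ :=
  ∑ k ∈ Finset.range (n/2 + 1), mu n A k • (Qp N ^ k * lin x ^ (n - 2*k))

lemma lapl_sum {ι : Type*} (s : Finset ι) (f : ι → MvPolynomial (Fin N) ℝ) :
    lapl (∑ i ∈ s, f i) = ∑ i ∈ s, lapl (f i) := by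
  unfold lapl
  rw [Finset.sum_comm]
  refine Finset.sum_congr rfl fun i _ => ?_
  rw [map_sum, map_sum]

lemma lapl_smul (c : ℝ) (p : MvPolynomial (Fin N) ℝ) : lapl (c • p) = c • lapl p := by
  rw [← C_mul', lapl_C_mul, C_mul']

lemma lapl_hpol (n : ℕ) (A : ℝ) (hN : (N:ℝ) = 2*A + 3) (hA : 0 ≤ A)
    (x : Fin N → ℝ) (hx : dot x x = 1) :
    lapl (hpol N n A x) = 0 := by
  unfold hpol
  rw [lapl_sum]
  have step : ∀ k ∈ Finset.range (n/2 + 1),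
      lapl (mu n A k • (Qp N ^ k * lin x ^ (n - 2*k)))
        = (mu n A k * (2*(k:ℝ)*(2*(k:ℝ) + (N:ℝ) - 2 + 2*(((n - 2*k : ℕ)):ℝ))))
            • (Qp N ^ (k-1) * lin x ^ (n - 2*k))
          + (mu n A k * (((n - 2*k:ℕ):ℝ)*(((n - 2*k:ℕ):ℝ)-1) * 1))
            • (Qp N ^ k * lin x ^ (n - 2*k - 2)) := by
    intro k _
    rw [lapl_smul, lapl_mul_QL, hx]
    rw [C_mul', C_mul', smul_add, smul_smul, smul_smul]
  rw [Finset.sum_congr rfl step, Finset.sum_add_distrib,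
      Finset.sum_range_succ' _ (n/2), Finset.sum_range_succ _ (n/2)]
  have h10 : (mu n A 0 * (2*((0:ℕ):ℝ)*(2*((0:ℕ):ℝ) + (N:ℝ) - 2 + 2*(((n - 2*0 : ℕ)):ℝ))))
      • (Qp N ^ (0-1) * lin x ^ (n - 2*0)) = 0 := by
    norm_num
  have h2K : (mu n A (n/2) * (((n - 2*(n/2):ℕ):ℝ)*(((n - 2*(n/2):ℕ):ℝ)-1) * 1))
      • (Qp N ^ (n/2) * lin x ^ (n - 2*(n/2) - 2)) = 0 := by
    have hr : n - 2*(n/2) = 0 ∨ n - 2*(n/2) = 1 := by omega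
    rcases hr with hr | hr <;> rw [hr] <;> norm_num
  rw [h10, h2K, add_zero, add_zero, ← Finset.sum_add_distrib]
  refine Finset.sum_eq_zero fun k hk => ?_
  rw [Finset.mem_range] at hk
  have hkn : 2*(k+1) ≤ n := by omega
  have e1 : (k + 1 - 1 : ℕ) = k := by omega
  have e2 : (n - 2*(k+1) : ℕ) = n - 2*k - 2 := by omega
  rw [e1, e2, ← add_smul]
  convert zero_smul ℝ _
  have c1 : ((n - 2*(k+1) : ℕ):ℝ) = (n:ℝ) - 2*(k:ℝ) - 2 := by
    rw [Nat.cast_sub hkn]; push_cast; ring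
  have c2 : ((n - 2*k : ℕ):ℝ) = (n:ℝ) - 2*(k:ℝ) := by
    rw [Nat.cast_sub (by omega)]; push_cast; ring
  rw [e2] at c1
  have hD : (0:ℝ) < 2*(n:ℝ) - 2*(k:ℝ) + 2*A - 1 := by
    have : (2*(k:ℝ) + 2) ≤ (n:ℝ) := by exact_mod_cast hkn
    linarith
  have hrec := mu_rec n A k (ne_of_gt hD)
  push_cast
  rw [c1, c2, hN]
  linear_combination hrec

lemma lapl_iter_C_mul (k : ℕ) (c : ℝ) (p : MvPolynomial (Fin N) ℝ) :
    lapl^[k] (C c * p) = C c * lapl^[k] p := by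
  induction k generalizing p with
  | zero => simp
  | succ k ih => rw [Function.iterate_succ_apply, Function.iterate_succ_apply, lapl_C_mul, ih]

lemma dop_iter_C_mul (y : Fin N → ℝ) (k : ℕ) (c : ℝ) (p : MvPolynomial (Fin N) ℝ) :
    (dop y)^[k] (C c * p) = C c * (dop y)^[k] p := by
  induction k generalizing p with
  | zero => simp
  | succ k ih => rw [Function.iterate_succ_apply, Function.iterate_succ_apply, dop_C_mul, ih]

lemma lapl_iter_zero (k : ℕ) : lapl^[k] (0 : MvPolynomial (Fin N) ℝ) = 0 := by
  induction k with
  | zero => simp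
  | succ k ih => rw [Function.iterate_succ_apply, lapl_zero, ih]

lemma fact_succ_succ (M : ℕ) : ((M+2).factorial : ℝ) = ((M:ℝ)+2) * ((M:ℝ)+1) * (M.factorial : ℝ) := by
  rw [show M+2 = (M+1)+1 from rfl, Nat.factorial_succ, Nat.factorial_succ]
  push_cast
  ring

lemma lapl_iter_lin_pow (y : Fin N → ℝ) (hy : dot y y = 1) (k m : ℕ) :
    lapl^[k] (lin y ^ (m + 2*k))
      = C (((m + 2*k).factorial : ℝ) / (m.factorial : ℝ)) * lin y ^ m := by
  induction k with
  | zero =>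
    rw [Function.iterate_zero_apply, Nat.mul_zero, Nat.add_zero, div_self (by
      exact_mod_cast Nat.factorial_ne_zero m), C_1, one_mul]
  | succ k ih =>
    rw [show m + 2*(k+1) = (m + 2*k) + 2 by omega, Function.iterate_succ_apply, lapl_lin_pow, hy,
        show ((m + 2*k) + 2 - 2 : ℕ) = m + 2*k by omega, lapl_iter_C_mul, ih]
    refine C_merge _ _ _ ?_ _
    have hm : (m.factorial : ℝ) ≠ 0 := by exact_mod_cast Nat.factorial_ne_zero m
    rw [fact_succ_succ, ← mul_div_assoc]
    congr 1
    push_cast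
    ring

lemma dop_iter_lin_pow (x y : Fin N → ℝ) (m : ℕ) :
    (dop x)^[m] (lin y ^ m) = C ((m.factorial : ℝ) * dot x y ^ m) := by
  induction m with
  | zero => simp
  | succ m ih =>
    rw [Function.iterate_succ_apply, dop_lin_pow, show (m + 1 - 1 : ℕ) = m by omega,
        dop_iter_C_mul, ih]
    rw [← C_mul]
    congr 1
    rw [Nat.factorial_succ]
    push_cast
    ring

theorem FF_hpol (n : ℕ) (A : ℝ) (hN : (N:ℝ) = 2*A+3) (hA : 0 ≤ A) (x y : Fin N → ℝ)
    (hx : dot x x = 1) (hy : dot y y = 1) :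
    FF (hpol N n A x) (hpol N n A y)
      = (n.factorial : ℝ) * ∑ k ∈ Finset.range (n/2 + 1), mu n A k * dot x y ^ (n - 2*k) := by
  have hz : lapl (hpol N n A y) = 0 := lapl_hpol n A hN hA y hy
  conv_lhs => rw [hpol]
  rw [FF_sum_left]
  have step1 : ∀ k ∈ Finset.range (n/2 + 1), k ≠ 0 →
      FF (mu n A k • (Qp N ^ k * lin x ^ (n - 2*k))) (hpol N n A y) = 0 := by
    intro k _ hk0
    obtain ⟨k', rfl⟩ : ∃ k', k = k' + 1 := ⟨k - 1, by omega⟩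
    rw [FF_smul_left, FF_Qpow_mul, Function.iterate_succ_apply, hz, lapl_iter_zero,
        FF_zero_right, mul_zero]
  rw [Finset.sum_eq_single 0 step1 (fun h => absurd (Finset.mem_range.mpr (by omega)) h)]
  rw [FF_smul_left, show mu n A 0 = 1 from rfl, one_mul, pow_zero, one_mul, Nat.mul_zero,
      Nat.sub_zero, FF_comm, hpol, FF_sum_left]
  have step2 : ∀ k ∈ Finset.range (n/2 + 1),
      FF (mu n A k • (Qp N ^ k * lin y ^ (n - 2*k))) (lin x ^ n)
        = (n.factorial : ℝ) * (mu n A k * dot x y ^ (n - 2*k)) := by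
    intro k hk
    rw [Finset.mem_range] at hk
    have h2k : 2*k ≤ n := by omega
    rw [FF_smul_left, FF_Qpow_mul,
        show (lin x ^ n : MvPolynomial (Fin N) ℝ) = lin x ^ ((n - 2*k) + 2*k) by
          rw [Nat.sub_add_cancel h2k],
        lapl_iter_lin_pow x hx, FF_C_mul_right, FF_Lpow, dop_iter_lin_pow, coeff_zero_C]
    have h1 : ((n - 2*k).factorial : ℝ) ≠ 0 := by exact_mod_cast Nat.factorial_ne_zero _
    rw [Nat.sub_add_cancel h2k, dot_comm y x]
    field_simp
  rw [Finset.sum_congr rfl step2, ← Finset.mul_sum]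

theorem kernel_psd_core (n : ℕ) (A : ℝ) (hN : (N:ℝ) = 2*A+3) (hA : 0 ≤ A) {k : ℕ}
    (x : Fin k → Fin N → ℝ) (hx : ∀ i, dot (x i) (x i) = 1) (M : Fin k → Fin k → ℝ)
    (hM : ∀ c : Fin k → ℝ, 0 ≤ ∑ i, ∑ j, c i * c j * M i j) :
    0 ≤ ∑ i, ∑ j, M i j *
      ∑ kk ∈ Finset.range (n/2 + 1), mu n A kk * dot (x i) (x j) ^ (n - 2*kk) := by
  classical
  set S : Finset (Fin N →₀ ℕ) :=
    Finset.univ.biUnion (fun i => (hpol N n A (x i)).support) with hS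
  have hFF : ∀ i j : Fin k,
      ∑ kk ∈ Finset.range (n/2 + 1), mu n A kk * dot (x i) (x j) ^ (n - 2*kk)
        = ((n.factorial : ℝ))⁻¹ *
          ∑ a ∈ S, wt a * (hpol N n A (x i)).coeff a * (hpol N n A (x j)).coeff a := by
    intro i j
    have hsub : (hpol N n A (x i)).support ⊆ S := by
      intro a ha
      rw [hS]
      exact Finset.mem_biUnion.mpr ⟨i, Finset.mem_univ i, ha⟩
    rw [← FF_eq_sum (hpol N n A (x j)) hsub, FF_hpol n A hN hA _ _ (hx i) (hx j),
        ← mul_assoc, inv_mul_cancel₀ (by exact_mod_cast Nat.factorial_ne_zero n), one_mul]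
  have key : ∑ i, ∑ j, M i j *
      ∑ kk ∈ Finset.range (n/2 + 1), mu n A kk * dot (x i) (x j) ^ (n - 2*kk)
      = ∑ a ∈ S, ∑ i, ∑ j, ((n.factorial : ℝ))⁻¹ *
          (wt a * (hpol N n A (x i)).coeff a * (hpol N n A (x j)).coeff a * M i j) := by
    have s1 : ∀ i j : Fin k, M i j *
        (∑ kk ∈ Finset.range (n/2 + 1), mu n A kk * dot (x i) (x j) ^ (n - 2*kk))
        = ∑ a ∈ S, ((n.factorial : ℝ))⁻¹ *
          (wt a * (hpol N n A (x i)).coeff a * (hpol N n A (x j)).coeff a * M i j) := by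
      intro i j
      rw [hFF i j, Finset.mul_sum, Finset.mul_sum]
      exact Finset.sum_congr rfl fun a _ => by ring
    calc ∑ i, ∑ j, M i j *
          ∑ kk ∈ Finset.range (n/2 + 1), mu n A kk * dot (x i) (x j) ^ (n - 2*kk)
        = ∑ i, ∑ j, ∑ a ∈ S, ((n.factorial : ℝ))⁻¹ *
            (wt a * (hpol N n A (x i)).coeff a * (hpol N n A (x j)).coeff a * M i j) :=
          Finset.sum_congr rfl fun i _ => Finset.sum_congr rfl fun j _ => s1 i j
      _ = ∑ i, ∑ a ∈ S, ∑ j, ((n.factorial : ℝ))⁻¹ *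
            (wt a * (hpol N n A (x i)).coeff a * (hpol N n A (x j)).coeff a * M i j) :=
          Finset.sum_congr rfl fun i _ => Finset.sum_comm
      _ = ∑ a ∈ S, ∑ i, ∑ j, ((n.factorial : ℝ))⁻¹ *
            (wt a * (hpol N n A (x i)).coeff a * (hpol N n A (x j)).coeff a * M i j) :=
          Finset.sum_comm
  rw [key]
  refine Finset.sum_nonneg fun a _ => ?_
  have e1 : ∑ i, ∑ j, ((n.factorial : ℝ))⁻¹ *
      (wt a * (hpol N n A (x i)).coeff a * (hpol N n A (x j)).coeff a * M i j)
      = (((n.factorial : ℝ))⁻¹ * wt a) *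
        ∑ i, ∑ j, (hpol N n A (x i)).coeff a * (hpol N n A (x j)).coeff a * M i j := by
    rw [Finset.mul_sum]
    refine Finset.sum_congr rfl fun i _ => ?_
    rw [Finset.mul_sum]
    refine Finset.sum_congr rfl fun j _ => by ring
  rw [e1]
  refine mul_nonneg (mul_nonneg (by positivity) (wt_pos a).le) ?_
  exact hM (fun i => (hpol N n A (x i)).coeff a)


/-! ## Polynomial (single-variable) part: identifying `jacobiP` with the Gegenbauer sum -/

section PolyPart
open Polynomial

/-- the Gegenbauer-type polynomial as a `Polynomial ℝ` -/
def Gpoly (n : ℕ) (A : ℝ) : Polynomial ℝ :=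
  ∑ k ∈ Finset.range (n/2 + 1), Polynomial.C (mu n A k) * Polynomial.X ^ (n - 2*k)

/-- coefficients of the Jacobi polynomial in powers of `(x-1)` -/
def jcv (n : ℕ) (A : ℝ) (k : ℕ) : ℝ :=
  (n.choose k : ℝ) * (Real.Gamma (A + A + n + k + 1) / Real.Gamma (A + k + 1)) * (1/2)^k

def Jzpoly (n : ℕ) (A : ℝ) : Polynomial ℝ :=
  ∑ k ∈ Finset.range (n + 1), Polynomial.C (jcv n A k) * Polynomial.X ^ k

def jpref (n : ℕ) (A : ℝ) : ℝ :=
  Real.Gamma (A + n + 1) / (n.factorial * Real.Gamma (A + A + n + 1))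

def Jpoly (n : ℕ) (A : ℝ) : Polynomial ℝ :=
  Polynomial.C (jpref n A) * (Jzpoly n A).comp (Polynomial.X - 1)

/-- the Jacobi differential operator -/
def Lop (n : ℕ) (A : ℝ) (p : Polynomial ℝ) : Polynomial ℝ :=
  derivative (derivative p) - derivative (derivative p) * Polynomial.X ^ 2
    - Polynomial.C (2*A+2) * (derivative p * Polynomial.X ^ 1)
    + Polynomial.C ((n:ℝ)*((n:ℝ)+2*A+1)) * p

/-- the transported operator in the variable `t = x - 1` -/
def Mop (n : ℕ) (A : ℝ) (p : Polynomial ℝ) : Polynomial ℝ :=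
  -(derivative (derivative p) * Polynomial.X ^ 2
      + Polynomial.C 2 * (derivative (derivative p) * Polynomial.X ^ 1))
    - Polynomial.C (2*A+2) * (derivative p * Polynomial.X ^ 1 + derivative p)
    + Polynomial.C ((n:ℝ)*((n:ℝ)+2*A+1)) * p

lemma coeff_Lop (n : ℕ) (A : ℝ) (p : Polynomial ℝ) (j : ℕ) :
    (Lop n A p).coeff j
      = ((j:ℝ)+1)*((j:ℝ)+2) * p.coeff (j+2)
        + ((n:ℝ)-(j:ℝ))*((n:ℝ)+(j:ℝ)+2*A+1) * p.coeff j := by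
  match j with
  | 0 =>
    simp only [Lop, Polynomial.coeff_add, Polynomial.coeff_sub, Polynomial.coeff_C_mul,
      Polynomial.coeff_mul_X_pow', Polynomial.coeff_derivative]
    simp only [if_neg (show ¬ (2:ℕ) ≤ 0 by omega), if_neg (show ¬ (1:ℕ) ≤ 0 by omega)]
    push_cast
    ring
  | 1 =>
    simp only [Lop, Polynomial.coeff_add, Polynomial.coeff_sub, Polynomial.coeff_C_mul,
      Polynomial.coeff_mul_X_pow', Polynomial.coeff_derivative]
    simp only [if_neg (show ¬ (2:ℕ) ≤ 1 by omega), if_pos (show (1:ℕ) ≤ 1 by omega),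
      show (1-1:ℕ) = 0 from rfl]
    push_cast
    ring
  | (i + 2) =>
    simp only [Lop, Polynomial.coeff_add, Polynomial.coeff_sub, Polynomial.coeff_C_mul,
      Polynomial.coeff_mul_X_pow', Polynomial.coeff_derivative]
    rw [if_pos (by omega : 2 ≤ i + 2), if_pos (by omega : 1 ≤ i + 2),
        show (i + 2 - 2 : ℕ) = i by omega, show (i + 2 - 1 : ℕ) = i + 1 by omega]
    push_cast
    ring

lemma coeff_Mop (n : ℕ) (A : ℝ) (p : Polynomial ℝ) (j : ℕ) :
    (Mop n A p).coeff j
      = -2*((j:ℝ)+1)*((j:ℝ)+A+1) * p.coeff (j+1)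
        + ((n:ℝ)-(j:ℝ))*((n:ℝ)+(j:ℝ)+2*A+1) * p.coeff j := by
  match j with
  | 0 =>
    simp only [Mop, Polynomial.coeff_add, Polynomial.coeff_sub, Polynomial.coeff_neg,
      Polynomial.coeff_C_mul, Polynomial.coeff_mul_X_pow', Polynomial.coeff_derivative]
    simp only [if_neg (show ¬ (2:ℕ) ≤ 0 by omega), if_neg (show ¬ (1:ℕ) ≤ 0 by omega)]
    push_cast
    ring
  | 1 =>
    simp only [Mop, Polynomial.coeff_add, Polynomial.coeff_sub, Polynomial.coeff_neg,
      Polynomial.coeff_C_mul, Polynomial.coeff_mul_X_pow', Polynomial.coeff_derivative]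
    simp only [if_neg (show ¬ (2:ℕ) ≤ 1 by omega), if_pos (show (1:ℕ) ≤ 1 by omega),
      show (1-1:ℕ) = 0 from rfl]
    push_cast
    ring
  | (i + 2) =>
    simp only [Mop, Polynomial.coeff_add, Polynomial.coeff_sub, Polynomial.coeff_neg,
      Polynomial.coeff_C_mul, Polynomial.coeff_mul_X_pow', Polynomial.coeff_derivative]
    rw [if_pos (by omega : 2 ≤ i + 2), if_pos (by omega : 1 ≤ i + 2),
        show (i + 2 - 2 : ℕ) = i by omega, show (i + 2 - 1 : ℕ) = i + 1 by omega]
    push_cast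
    ring


lemma Lop_C_mul (n : ℕ) (A : ℝ) (c : ℝ) (p : Polynomial ℝ) :
    Lop n A (Polynomial.C c * p) = Polynomial.C c * Lop n A p := by
  unfold Lop
  rw [Polynomial.derivative_C_mul, Polynomial.derivative_C_mul]
  ring

lemma Lop_sub (n : ℕ) (A : ℝ) (p q : Polynomial ℝ) :
    Lop n A (p - q) = Lop n A p - Lop n A q := by
  unfold Lop
  rw [derivative_sub, derivative_sub]
  ring

lemma Lop_coeff_high (n : ℕ) (A : ℝ) (hA : 0 ≤ A) (p : Polynomial ℝ) (hp : Lop n A p = 0)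
    (j : ℕ) (hj : n < j) : p.coeff j = 0 := by
  by_contra hc
  have hD : n < p.natDegree := lt_of_lt_of_le hj (Polynomial.le_natDegree_of_ne_zero hc)
  have h1 : (Lop n A p).coeff p.natDegree = 0 := by rw [hp, Polynomial.coeff_zero]
  rw [coeff_Lop] at h1
  have h2 : p.coeff (p.natDegree + 2) = 0 :=
    Polynomial.coeff_eq_zero_of_natDegree_lt (by omega)
  rw [h2, mul_zero, zero_add] at h1
  have h4 : ((n:ℝ) - (p.natDegree:ℝ)) ≠ 0 := by
    have : (n:ℝ) < (p.natDegree:ℝ) := by exact_mod_cast hD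
    linarith
  have h5 : ((n:ℝ) + (p.natDegree:ℝ) + 2*A + 1) ≠ 0 := by positivity
  have h6 : p.coeff p.natDegree = 0 := by
    rcases mul_eq_zero.mp h1 with h | h
    · exact absurd h (mul_ne_zero h4 h5)
    · exact h
  have hp0 : p ≠ 0 := fun h => hc (by simp [h])
  exact (Polynomial.leadingCoeff_ne_zero.mpr hp0) h6

lemma Lop_unique_zero (n : ℕ) (A : ℝ) (hA : 0 ≤ A) (p : Polynomial ℝ)
    (hp : Lop n A p = 0) (h0 : p.coeff n = 0) : p = 0 := by
  have high : ∀ j, n < j → p.coeff j = 0 := Lop_coeff_high n A hA p hp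
  have key : ∀ t, p.coeff (n - t) = 0 := by
    intro t
    induction t using Nat.strong_induction_on with
    | _ t ih =>
      match t, ih with
      | 0, _ => simpa using h0
      | 1, ih =>
        rcases Nat.eq_zero_or_pos n with hn | hn
        · rw [show n - 1 = n - 0 by omega]
          exact ih 0 (by omega)
        · have hrel : (Lop n A p).coeff (n - 1) = 0 := by rw [hp, Polynomial.coeff_zero]
          rw [coeff_Lop] at hrel
          rw [show (n - 1) + 2 = n + 1 by omega] at hrel
          rw [high (n+1) (by omega), mul_zero, zero_add] at hrel
          have c4 : ((n:ℝ) - ((n-1:ℕ):ℝ)) ≠ 0 := by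
            rw [Nat.cast_sub hn]
            push_cast
            norm_num
          have c5 : ((n:ℝ) + ((n-1:ℕ):ℝ) + 2*A + 1) ≠ 0 := by positivity
          rcases mul_eq_zero.mp hrel with h | h
          · exact absurd h (mul_ne_zero c4 c5)
          · exact h
      | (t+2), ih =>
        by_cases htn : t + 2 ≤ n
        · have hrel : (Lop n A p).coeff (n - (t+2)) = 0 := by rw [hp, Polynomial.coeff_zero]
          rw [coeff_Lop] at hrel
          rw [show n - (t+2) + 2 = n - t by omega] at hrel
          rw [ih t (by omega), mul_zero, zero_add] at hrel
          have c4 : ((n:ℝ) - ((n-(t+2):ℕ):ℝ)) ≠ 0 := by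
            rw [Nat.cast_sub htn]
            push_cast
            intro h
            have : ((t:ℝ)+2) = 0 := by linarith
            norm_num at this
            linarith [Nat.cast_nonneg (α := ℝ) t]
          have c5 : ((n:ℝ) + ((n-(t+2):ℕ):ℝ) + 2*A + 1) ≠ 0 := by positivity
          rcases mul_eq_zero.mp hrel with h | h
          · exact absurd h (mul_ne_zero c4 c5)
          · exact h
        · rw [show n - (t+2) = n - n by omega]
          exact ih n (by omega)
  ext j
  rw [Polynomial.coeff_zero]
  rcases le_or_gt j n with h | h
  · rw [show j = n - (n - j) by omega]
    exact key (n - j)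
  · exact high j h

lemma coeff_Gpoly (n : ℕ) (A : ℝ) (j : ℕ) :
    (Gpoly n A).coeff j
      = if j ≤ n ∧ (n - j) % 2 = 0 then mu n A ((n - j)/2) else 0 := by
  unfold Gpoly
  rw [Polynomial.finset_sum_coeff]
  have e : ∀ k, (Polynomial.C (mu n A k) * Polynomial.X ^ (n - 2*k)).coeff j
      = mu n A k * (if j = n - 2*k then 1 else 0) := by
    intro k
    rw [Polynomial.coeff_C_mul, Polynomial.coeff_X_pow]
  rw [Finset.sum_congr rfl fun k _ => e k]
  by_cases hj : j ≤ n ∧ (n - j) % 2 = 0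
  · rw [if_pos hj]
    rw [Finset.sum_eq_single ((n - j)/2)]
    · rw [if_pos (by omega), mul_one]
    · intro b hb hbne
      rw [Finset.mem_range] at hb
      rw [if_neg (by omega), mul_zero]
    · intro h
      exact absurd (Finset.mem_range.mpr (by omega)) h
  · rw [if_neg hj]
    refine Finset.sum_eq_zero fun b hb => ?_
    rw [Finset.mem_range] at hb
    rw [if_neg (by omega), mul_zero]

lemma Gpoly_coeff_n (n : ℕ) (A : ℝ) : (Gpoly n A).coeff n = 1 := by
  rw [coeff_Gpoly, if_pos (by omega), show (n - n)/2 = 0 by omega]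
  rfl

lemma Lop_Gpoly (n : ℕ) (A : ℝ) (hA : 0 ≤ A) : Lop n A (Gpoly n A) = 0 := by
  ext j
  rw [Polynomial.coeff_zero, coeff_Lop, coeff_Gpoly, coeff_Gpoly]
  by_cases h1 : j + 2 ≤ n ∧ (n - (j+2)) % 2 = 0
  · rw [if_pos h1, if_pos (by omega : j ≤ n ∧ (n - j) % 2 = 0)]
    have hKk : (n - j)/2 = (n - (j+2))/2 + 1 := by omega
    rw [hKk]
    set K := (n - (j+2))/2 with hK
    have hnK : n = 2*K + (j + 2) := by omega
    have cn : (n:ℝ) = 2*(K:ℝ) + (j:ℝ) + 2 := by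
      rw [hnK]; push_cast; ring
    have hD : (0:ℝ) < 2*(n:ℝ) - 2*(K:ℝ) + 2*A - 1 := by
      rw [cn]
      have : (0:ℝ) ≤ (K:ℝ) := Nat.cast_nonneg K
      have : (0:ℝ) ≤ (j:ℝ) := Nat.cast_nonneg j
      linarith
    have hrec := mu_rec n A K (ne_of_gt hD)
    rw [cn] at hrec ⊢
    linear_combination hrec
  · rw [if_neg h1]
    by_cases h2 : j ≤ n ∧ (n - j) % 2 = 0
    · rw [if_pos h2]
      have hj : j = n := by omega
      subst hj
      ring
    · rw [if_neg h2]
      ring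

lemma jcv_eq_zero (n : ℕ) (A : ℝ) {k : ℕ} (h : n < k) : jcv n A k = 0 := by
  unfold jcv
  rw [Nat.choose_eq_zero_of_lt h]
  simp

lemma coeff_Jzpoly (n : ℕ) (A : ℝ) (j : ℕ) : (Jzpoly n A).coeff j = jcv n A j := by
  unfold Jzpoly
  rw [Polynomial.finset_sum_coeff]
  have e : ∀ k, (Polynomial.C (jcv n A k) * Polynomial.X ^ k).coeff j
      = jcv n A k * (if j = k then 1 else 0) := by
    intro k
    rw [Polynomial.coeff_C_mul, Polynomial.coeff_X_pow]
  rw [Finset.sum_congr rfl fun k _ => e k]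
  rcases le_or_gt j n with h | h
  · rw [Finset.sum_eq_single j]
    · rw [if_pos rfl, mul_one]
    · intro b _ hb
      rw [if_neg (fun hh => hb hh.symm), mul_zero]
    · intro hh
      exact absurd (Finset.mem_range.mpr (by omega)) hh
  · rw [jcv_eq_zero n A h]
    refine Finset.sum_eq_zero fun b hb => ?_
    rw [Finset.mem_range] at hb
    rw [if_neg (by omega), mul_zero]

lemma Mop_Jzpoly (n : ℕ) (A : ℝ) (hA : 0 ≤ A) : Mop n A (Jzpoly n A) = 0 := by
  ext j
  rw [Polynomial.coeff_zero, coeff_Mop, coeff_Jzpoly, coeff_Jzpoly]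
  rcases lt_trichotomy j n with hj | hj | hj
  · -- main case
    have g1pos : (0:ℝ) < A + (j:ℝ) + 1 := by positivity
    have g2pos : (0:ℝ) < A + A + (n:ℝ) + (j:ℝ) + 1 := by positivity
    have G1pos := Real.Gamma_pos_of_pos g1pos
    have G2pos := Real.Gamma_pos_of_pos g2pos
    have g1 : Real.Gamma (A + ((j+1:ℕ):ℝ) + 1) = (A + (j:ℝ) + 1) * Real.Gamma (A + (j:ℝ) + 1) := by
      rw [show A + ((j+1:ℕ):ℝ) + 1 = (A + (j:ℝ) + 1) + 1 by push_cast; ring,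
          Real.Gamma_add_one (ne_of_gt g1pos)]
    have g2 : Real.Gamma (A + A + (n:ℝ) + ((j+1:ℕ):ℝ) + 1)
        = (A + A + (n:ℝ) + (j:ℝ) + 1) * Real.Gamma (A + A + (n:ℝ) + (j:ℝ) + 1) := by
      rw [show A + A + (n:ℝ) + ((j+1:ℕ):ℝ) + 1 = (A + A + (n:ℝ) + (j:ℝ) + 1) + 1 by
        push_cast; ring, Real.Gamma_add_one (ne_of_gt g2pos)]
    have c3 : ((n.choose (j+1)) : ℝ) * ((j:ℝ)+1) = (n.choose j : ℝ) * ((n:ℝ) - (j:ℝ)) := by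
      have := Nat.choose_succ_right_eq n j
      have hcast : (((n.choose (j+1)) * (j+1) : ℕ) : ℝ) = ((n.choose j * (n - j) : ℕ) : ℝ) := by
        exact_mod_cast congrArg (Nat.cast (R := ℝ)) this
      push_cast [Nat.cast_sub hj.le] at hcast
      linarith
    have c3' : ((n.choose (j+1)) : ℝ) = (n.choose j : ℝ) * ((n:ℝ) - (j:ℝ)) / ((j:ℝ)+1) := by
      rw [eq_div_iff (by positivity)]
      exact c3
    unfold jcv
    rw [g1, g2, c3']
    field_simp
    ring
  · rw [jcv_eq_zero n A (show n < j + 1 by omega), hj]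
    ring
  · rw [jcv_eq_zero n A (by omega), jcv_eq_zero n A hj]
    ring

lemma Lop_comp (n : ℕ) (A : ℝ) (p : Polynomial ℝ) :
    Lop n A (p.comp (Polynomial.X - 1)) = (Mop n A p).comp (Polynomial.X - 1) := by
  have hd : derivative (Polynomial.X - 1 : Polynomial ℝ) = 1 := by simp
  have d1 : derivative (p.comp (Polynomial.X - 1)) = (derivative p).comp (Polynomial.X - 1) := by
    rw [Polynomial.derivative_comp, hd, one_mul]
  have d2 : derivative (derivative (p.comp (Polynomial.X - 1)))
      = (derivative (derivative p)).comp (Polynomial.X - 1) := by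
    rw [d1, Polynomial.derivative_comp, hd, one_mul]
  unfold Lop Mop
  rw [d2, d1]
  simp only [Polynomial.add_comp, Polynomial.sub_comp, Polynomial.neg_comp, Polynomial.mul_comp,
    Polynomial.C_comp, Polynomial.X_comp, Polynomial.pow_comp, Polynomial.one_comp, map_ofNat,
    Polynomial.ofNat_comp]
  ring

lemma Lop_Jpoly (n : ℕ) (A : ℝ) (hA : 0 ≤ A) : Lop n A (Jpoly n A) = 0 := by
  unfold Jpoly
  rw [Lop_C_mul, Lop_comp, Mop_Jzpoly n A hA, Polynomial.zero_comp, mul_zero]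

theorem Jpoly_eq (n : ℕ) (A : ℝ) (hA : 0 ≤ A) :
    Jpoly n A = Polynomial.C ((Jpoly n A).coeff n) * Gpoly n A := by
  have h1 : Lop n A (Jpoly n A - Polynomial.C ((Jpoly n A).coeff n) * Gpoly n A) = 0 := by
    rw [Lop_sub, Lop_Jpoly n A hA, Lop_C_mul, Lop_Gpoly n A hA, mul_zero, sub_zero]
  have h2 : (Jpoly n A - Polynomial.C ((Jpoly n A).coeff n) * Gpoly n A).coeff n = 0 := by
    rw [Polynomial.coeff_sub, Polynomial.coeff_C_mul, Gpoly_coeff_n, mul_one, sub_self]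
  have h3 := Lop_unique_zero n A hA _ h1 h2
  rw [sub_eq_zero] at h3
  exact h3


lemma comp_sum {ι : Type*} (s : Finset ι) (f : ι → Polynomial ℝ) (w : Polynomial ℝ) :
    (∑ i ∈ s, f i).comp w = ∑ i ∈ s, (f i).comp w := by
  simp only [Polynomial.comp]
  exact Polynomial.eval₂_finset_sum _ _ _ _

lemma Jpoly_coeff_n (n : ℕ) (A : ℝ) : (Jpoly n A).coeff n = jpref n A * jcv n A n := by
  unfold Jpoly Jzpoly
  rw [Polynomial.coeff_C_mul, comp_sum, Polynomial.finset_sum_coeff]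
  congr 1
  have hm : ((Polynomial.X - 1 : Polynomial ℝ)).Monic := by
    simpa using Polynomial.monic_X_sub_C (1:ℝ)
  have hdeg : ∀ b : ℕ, ((Polynomial.X - 1: Polynomial ℝ)^b).natDegree = b := by
    intro b
    rw [hm.natDegree_pow]
    have : (Polynomial.X - 1 : Polynomial ℝ).natDegree = 1 := by
      simpa using Polynomial.natDegree_X_sub_C (1:ℝ)
    rw [this, mul_one]
  rw [Finset.sum_eq_single n]
  · rw [Polynomial.mul_comp, Polynomial.C_comp, Polynomial.pow_comp, Polynomial.X_comp,
        Polynomial.coeff_C_mul]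
    have h1 : ((Polynomial.X - 1: Polynomial ℝ)^n).coeff n = 1 := by
      have := (hm.pow n).coeff_natDegree
      rwa [hdeg n] at this
    rw [h1, mul_one]
  · intro b hb hbn
    rw [Finset.mem_range] at hb
    rw [Polynomial.mul_comp, Polynomial.C_comp, Polynomial.pow_comp, Polynomial.X_comp,
        Polynomial.coeff_C_mul]
    rw [Polynomial.coeff_eq_zero_of_natDegree_lt (by rw [hdeg b]; omega), mul_zero]
  · intro h
    exact absurd (Finset.mem_range.mpr (by omega)) h

lemma Jcoeff_pos (n : ℕ) (A : ℝ) (hA : 0 ≤ A) : 0 < (Jpoly n A).coeff n := by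
  rw [Jpoly_coeff_n]
  unfold jpref jcv
  rw [Nat.choose_self]
  have G1 := Real.Gamma_pos_of_pos (show (0:ℝ) < A + (n:ℝ) + 1 by positivity)
  have G2 := Real.Gamma_pos_of_pos (show (0:ℝ) < A + A + (n:ℝ) + 1 by positivity)
  have G3 := Real.Gamma_pos_of_pos (show (0:ℝ) < A + A + (n:ℝ) + (n:ℝ) + 1 by positivity)
  have hnf : (0:ℝ) < (n.factorial : ℝ) := by exact_mod_cast Nat.factorial_pos n
  have h4 : (0:ℝ) < ((1:ℝ)/2)^n := by positivity
  push_cast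
  refine mul_pos (div_pos G1 (mul_pos hnf G2)) (mul_pos (mul_pos one_pos (div_pos G3 G1)) h4)

lemma eval_Gpoly (n : ℕ) (A : ℝ) (s : ℝ) :
    Polynomial.eval s (Gpoly n A)
      = ∑ k ∈ Finset.range (n/2 + 1), mu n A k * s ^ (n - 2*k) := by
  unfold Gpoly
  rw [Polynomial.eval_finset_sum]
  exact Finset.sum_congr rfl fun k _ => by
    rw [Polynomial.eval_mul, Polynomial.eval_C, Polynomial.eval_pow, Polynomial.eval_X]

lemma eval_Jpoly (n : ℕ) (A : ℝ) (s : ℝ) :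
    Polynomial.eval s (Jpoly n A) = jacobiP A A n s := by
  unfold Jpoly Jzpoly jpref jcv jacobiP
  rw [Polynomial.eval_mul, Polynomial.eval_C, Polynomial.eval_comp]
  congr 1
  rw [Polynomial.eval_finset_sum]
  refine Finset.sum_congr rfl fun k _ => ?_
  rw [Polynomial.eval_mul, Polynomial.eval_C, Polynomial.eval_pow]
  simp only [Polynomial.eval_sub, Polynomial.eval_X, Polynomial.eval_one]
  rw [div_pow, one_pow, div_pow]
  ring

theorem jacobi_repr (n : ℕ) (A : ℝ) (hA : 0 ≤ A) (s : ℝ) :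
    jacobiP A A n s
      = (Jpoly n A).coeff n * ∑ k ∈ Finset.range (n/2 + 1), mu n A k * s ^ (n - 2*k) := by
  rw [← eval_Jpoly]
  conv_lhs => rw [Jpoly_eq n A hA]
  rw [Polynomial.eval_mul, Polynomial.eval_C, eval_Gpoly]

end PolyPart

/-! ## kernel positivity for `jacobiP` -/

theorem jacobi_kernel_psd (n : ℕ) (A : ℝ) (hN : (N:ℝ) = 2*A+3) (hA : 0 ≤ A) {k : ℕ}
    (x : Fin k → Fin N → ℝ) (hx : ∀ i, dot (x i) (x i) = 1) (M : Fin k → Fin k → ℝ)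
    (hM : ∀ c : Fin k → ℝ, 0 ≤ ∑ i, ∑ j, c i * c j * M i j) :
    0 ≤ ∑ i, ∑ j, M i j * jacobiP A A n (dot (x i) (x j)) := by
  have base := kernel_psd_core n A hN hA x hx M hM
  have hc := Jcoeff_pos n A hA
  have e1 : ∑ i, ∑ j, M i j * jacobiP A A n (dot (x i) (x j))
      = (Jpoly n A).coeff n * ∑ i, ∑ j, M i j *
          ∑ kk ∈ Finset.range (n/2 + 1), mu n A kk * dot (x i) (x j) ^ (n - 2*kk) := by
    rw [Finset.mul_sum]
    refine Finset.sum_congr rfl fun i _ => ?_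
    rw [Finset.mul_sum]
    refine Finset.sum_congr rfl fun j _ => ?_
    rw [jacobi_repr n A hA]
    ring
  rw [e1]
  exact mul_nonneg hc.le base


section Bound

variable (n : ℕ) (A : ℝ)

theorem jacobi_one_nonneg (hN : (N:ℝ) = 2*A+3) (hA : 0 ≤ A) : 0 ≤ jacobiP A A n 1 := by
  have hN3 : 3 ≤ N := by
    have : (3:ℝ) ≤ (N:ℝ) := by rw [hN]; linarith
    exact_mod_cast this
  set i0 : Fin N := ⟨0, by omega⟩ with hi0
  set x0 : Fin N → ℝ := fun i => if i = i0 then 1 else 0 with hx0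
  have hxx : dot x0 x0 = 1 := by
    unfold dot
    rw [Finset.sum_eq_single i0]
    · simp [hx0]
    · intro b _ hb
      simp [hx0, hb]
    · intro h
      exact absurd (Finset.mem_univ _) h
  have h := jacobi_kernel_psd n A hN hA (k := 1) (fun _ => x0) (fun _ => hxx)
    (fun _ _ => 1) (fun c => by
      simp only [Fin.sum_univ_one, mul_one]
      exact mul_self_nonneg (c 0))
  simpa [Fin.sum_univ_one, hxx] using h

theorem jacobi_abs_le (hN : (N:ℝ) = 2*A+3) (hA : 0 ≤ A) (s : ℝ) (hs1 : -1 ≤ s) (hs2 : s ≤ 1) :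
    |jacobiP A A n s| ≤ jacobiP A A n 1 := by
  have hN3 : 3 ≤ N := by
    have : (3:ℝ) ≤ (N:ℝ) := by rw [hN]; linarith
    exact_mod_cast this
  have hss : s^2 ≤ 1 := by nlinarith
  set i0 : Fin N := ⟨0, by omega⟩ with hi0
  set i1 : Fin N := ⟨1, by omega⟩ with hi1
  have hne : i0 ≠ i1 := by
    rw [hi0, hi1]
    intro h
    rw [Fin.mk.injEq] at h
    omega
  set x0 : Fin N → ℝ := fun i => if i = i0 then 1 else 0 with hx0
  set x1 : Fin N → ℝ := fun i =>
    if i = i0 then s else if i = i1 then Real.sqrt (1 - s^2) else 0 with hx1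
  have d00 : dot x0 x0 = 1 := by
    unfold dot
    rw [Finset.sum_eq_single i0]
    · simp [hx0]
    · intro b _ hb
      simp [hx0, hb]
    · intro h
      exact absurd (Finset.mem_univ _) h
  have d01 : dot x0 x1 = s := by
    unfold dot
    rw [Finset.sum_eq_single i0]
    · simp [hx0, hx1]
    · intro b _ hb
      simp [hx0, hb]
    · intro h
      exact absurd (Finset.mem_univ _) h
  have d10 : dot x1 x0 = s := by rw [dot_comm]; exact d01
  have d11 : dot x1 x1 = 1 := by
    unfold dot
    have key : ∀ i, x1 i * x1 i
        = (if i = i0 then s^2 else 0) + (if i = i1 then 1 - s^2 else 0) := by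
      intro i
      by_cases h0 : i = i0
      · have h1 : i ≠ i1 := by rw [h0]; exact hne
        have e : x1 i = s := by simp [hx1, h0]
        rw [e, if_pos h0, if_neg h1]
        ring
      · by_cases h1 : i = i1
        · have e : x1 i = Real.sqrt (1 - s^2) := by simp [hx1, h0, h1, Ne.symm hne]
          rw [e, if_neg h0, if_pos h1, Real.mul_self_sqrt (by nlinarith)]
          ring
        · have e : x1 i = 0 := by simp [hx1, h0, h1]
          rw [e, if_neg h0, if_neg h1]
          ring
    rw [Finset.sum_congr rfl fun i _ => key i, Finset.sum_add_distrib,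
        Finset.sum_ite_eq' Finset.univ i0 (fun _ => s^2),
        Finset.sum_ite_eq' Finset.univ i1 (fun _ => 1 - s^2)]
    simp
  have main : ∀ ε : ℝ, 0 ≤ jacobiP A A n 1 + ε * jacobiP A A n s
      + (ε * jacobiP A A n s + ε * ε * jacobiP A A n 1) := by
    intro ε
    have h := jacobi_kernel_psd n A hN hA (k := 2) ![x0, x1]
      (by
        intro i
        fin_cases i
        · simpa using d00
        · simpa using d11)
      (fun i j => (![1, ε] i) * (![1, ε] j))
      (fun c => by
        simp only [Fin.sum_univ_two, Matrix.cons_val_zero, Matrix.cons_val_one, Matrix.head_cons]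
        nlinarith [sq_nonneg (c 0 * 1 + c 1 * ε)])
    simp only [Fin.sum_univ_two, Matrix.cons_val_zero, Matrix.cons_val_one,
      Matrix.head_cons] at h
    rw [d00, d01, d10, d11] at h
    calc (0:ℝ) ≤ _ := h
      _ = jacobiP A A n 1 + ε * jacobiP A A n s
          + (ε * jacobiP A A n s + ε * ε * jacobiP A A n 1) := by ring
  have m1 := main 1
  have m2 := main (-1)
  rw [abs_le]
  constructor <;> nlinarith [m1, m2]

end Bound

end JacobiPSD


namespace JacobiPSD

lemma inner_eq_dot (d : ℕ) (x y : EucSp d) :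
    ⟪x, y⟫ = dot (N := d+1) (fun l => x l) (fun l => y l) := by
  simp [dot, PiLp.inner_apply, RCLike.inner_apply, starRingEnd_apply, star_trivial]
  exact Finset.sum_congr rfl fun _ _ => mul_comm _ _

lemma stat_diag_nonneg {m : ℕ} {B : ℝ → Matrix (Fin m) (Fin m) ℝ} (hB : StationaryCov B)
    (i : Fin m) : 0 ≤ B 0 i i := by
  have h := hB.2 1 (fun _ => (0:ℝ)) (fun _ => Pi.single i 1)
  simp only [Fin.sum_univ_one, sub_zero, Matrix.mulVec_single,
    single_dotProduct, mul_one, one_mul] at h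
  simpa using h

lemma stat_bound {m : ℕ} {B : ℝ → Matrix (Fin m) (Fin m) ℝ} (hB : StationaryCov B)
    (t : ℝ) (i j : Fin m) : |B t i j| ≤ (B 0 i i + B 0 j j) / 2 := by
  have key : ∀ ε : ℝ, 0 ≤ B 0 i i + ε * B t i j + (ε * B t i j + ε * ε * B 0 j j) := by
    intro ε
    have h := hB.2 2 ![t, 0] ![Pi.single i 1, Pi.single j ε]
    simp only [Fin.sum_univ_two, Matrix.cons_val_zero, Matrix.cons_val_one,
      Matrix.head_cons] at h
    have e00 : dotProduct (Pi.single i (1:ℝ))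
        ((B (t - t)).mulVec (Pi.single i 1)) = B 0 i i := by
      simp [sub_self, Matrix.mulVec_single, single_dotProduct]
    have e01 : dotProduct (Pi.single i (1:ℝ))
        ((B (t - 0)).mulVec (Pi.single j ε)) = ε * B t i j := by
      simp [Matrix.mulVec_single, single_dotProduct]
    have e10 : dotProduct (Pi.single j ε)
        ((B (0 - t)).mulVec (Pi.single i 1)) = ε * B t i j := by
      rw [zero_sub, hB.1 t]
      simp only [Matrix.mulVec_single, single_dotProduct, Matrix.transpose_apply,
        mul_one]
      simp
    have e11 : dotProduct (Pi.single j ε)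
        ((B (0 - 0)).mulVec (Pi.single j ε)) = ε * ε * B 0 j j := by
      simp [sub_self, Matrix.mulVec_single, single_dotProduct]
      ring
    rw [e00, e01, e10, e11] at h
    exact h
  have k1 := key 1
  have k2 := key (-1)
  rw [abs_le]
  constructor <;> nlinarith [k1, k2]

end JacobiPSD


open JacobiPSD

/-- If each `B_n` is a stationary covariance matrix function on `ℝ` and
`Σ_n B_n(0) P_n(1)` converges entrywise, then the series
`K((x₁,t₁),(x₂,t₂)) = Σ_n B_n(t₁−t₂) P_n(⟨x₁,x₂⟩)` converges entrywise absolutely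
and `K` is a covariance matrix kernel on `S^d × ℝ`. -/
theorem series_is_spatio_temporal_covariance_kernel (d m : ℕ) (hd : 2 ≤ d) (α β : ℝ)
    (hα : α = ((d : ℝ) - 2) / 2) (hβ : β = ((d : ℝ) - 2) / 2)
    (B : ℕ → ℝ → Matrix (Fin m) (Fin m) ℝ)
    (hB : ∀ n, StationaryCov (B n))
    (hBconv : ∀ i j, ∃ L, SeriesConv (fun n => B n 0 i j * jacobiP α β n 1) L) :
    ∃ K : Sph d × ℝ → Sph d × ℝ → Matrix (Fin m) (Fin m) ℝ,
      (∀ (p q : Sph d × ℝ) (i j : Fin m),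
        Summable (fun n =>
          |B n (p.2 - q.2) i j * jacobiP α β n ⟪(p.1 : EucSp d), (q.1 : EucSp d)⟫|) ∧
        SeriesConv
          (fun n => B n (p.2 - q.2) i j * jacobiP α β n ⟪(p.1 : EucSp d), (q.1 : EucSp d)⟫)
          (K p q i j)) ∧
      (∀ p q : Sph d × ℝ, (K p q).transpose = K q p) ∧
      (∀ (k : ℕ) (pt : Fin k → Sph d × ℝ) (a : Fin k → Fin m → ℝ),
        0 ≤ ∑ i, ∑ j, dotProduct (a i) ((K (pt i) (pt j)).mulVec (a j))) := by
  have hβα : β = α := by rw [hβ, hα]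
  rw [hβα] at hBconv ⊢
  have hA : 0 ≤ α := by
    have h2 : (2:ℝ) ≤ (d:ℝ) := by exact_mod_cast hd
    rw [hα]
    linarith
  have hN : ((d+1 : ℕ) : ℝ) = 2*α + 3 := by rw [hα]; push_cast; ring
  have hnorm : ∀ x : Sph d, ‖(x : EucSp d)‖ = 1 := fun x => mem_sphere_zero_iff_norm.mp x.2
  have hdot_self : ∀ x : Sph d,
      dot (N := d+1) (fun l => (x : EucSp d) l) (fun l => (x : EucSp d) l) = 1 := by
    intro x
    rw [← inner_eq_dot, real_inner_self_eq_norm_mul_norm, hnorm, one_mul]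
  have habs : ∀ x y : Sph d, |⟪(x : EucSp d), (y : EucSp d)⟫| ≤ 1 := by
    intro x y
    calc |⟪(x : EucSp d), (y : EucSp d)⟫| ≤ ‖(x : EucSp d)‖ * ‖(y : EucSp d)‖ :=
          abs_real_inner_le_norm _ _
      _ = 1 := by rw [hnorm, hnorm, one_mul]
  have hP1 : ∀ n : ℕ, 0 ≤ jacobiP α α n 1 := fun n => jacobi_one_nonneg (N := d+1) n α hN hA
  -- summability of diagonal series
  have hdiag : ∀ i : Fin m, Summable (fun n => B n 0 i i * jacobiP α α n 1) := by
    intro i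
    obtain ⟨L, hL⟩ := hBconv i i
    have hnn : ∀ n, 0 ≤ B n 0 i i * jacobiP α α n 1 :=
      fun n => mul_nonneg (stat_diag_nonneg (hB n) i) (hP1 n)
    refine summable_of_sum_range_le (c := L) hnn (fun n => ?_)
    have hmono : Monotone (fun N' => ∑ n ∈ Finset.range N', B n 0 i i * jacobiP α α n 1) := by
      intro u v huv
      exact Finset.sum_le_sum_of_subset_of_nonneg (Finset.range_subset_range.mpr huv)
        (fun k _ _ => hnn k)
    exact hmono.ge_of_tendsto hL n
  have hsum : ∀ (p q : Sph d × ℝ) (i j : Fin m),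
      Summable (fun n =>
        |B n (p.2 - q.2) i j * jacobiP α α n ⟪(p.1 : EucSp d), (q.1 : EucSp d)⟫|) := by
    intro p q i j
    have hs := habs p.1 q.1
    have hgsum : Summable (fun n => (B n 0 i i + B n 0 j j)/2 * jacobiP α α n 1) :=
      (((hdiag i).add (hdiag j)).mul_left (1/2)).congr (fun n => by ring)
    refine Summable.of_nonneg_of_le (fun n => abs_nonneg _) (fun n => ?_) hgsum
    rw [abs_mul]
    have h1 : |B n (p.2 - q.2) i j| ≤ (B n 0 i i + B n 0 j j)/2 := stat_bound (hB n) _ i j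
    have h2 : |jacobiP α α n ⟪(p.1 : EucSp d), (q.1 : EucSp d)⟫| ≤ jacobiP α α n 1 :=
      jacobi_abs_le (N := d+1) n α hN hA _ (abs_le.mp hs).1 (abs_le.mp hs).2
    exact mul_le_mul h1 h2 (abs_nonneg _) (le_trans (abs_nonneg _) h1)
  refine ⟨fun p q => Matrix.of fun i j =>
      ∑' n, B n (p.2 - q.2) i j * jacobiP α α n ⟪(p.1 : EucSp d), (q.1 : EucSp d)⟫,
    ?_, ?_, ?_⟩
  · intro p q i j
    refine ⟨hsum p q i j, ?_⟩
    exact ((hsum p q i j).of_abs).hasSum.tendsto_sum_nat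
  · intro p q
    ext i j
    simp only [Matrix.transpose_apply, Matrix.of_apply]
    refine tsum_congr fun n => ?_
    have h1 : q.2 - p.2 = -(p.2 - q.2) := by ring
    rw [h1, (hB n).1, Matrix.transpose_apply, real_inner_comm (q.1 : EucSp d)]
  · intro k pt a
    have dpe : ∀ (M' : Matrix (Fin m) (Fin m) ℝ) (u v : Fin m → ℝ),
        dotProduct u (M'.mulVec v) = ∑ l, ∑ r, u l * M' l r * v r := by
      intro M' u v
      simp only [dotProduct, Matrix.mulVec]
      refine Finset.sum_congr rfl fun l _ => ?_
      rw [Finset.mul_sum]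
      refine Finset.sum_congr rfl fun r _ => by ring
    have hentry : ∀ i j : Fin k,
        HasSum (fun n => ∑ l, ∑ r, a i l *
            (B n ((pt i).2 - (pt j).2) l r *
              jacobiP α α n ⟪((pt i).1 : EucSp d), ((pt j).1 : EucSp d)⟫) * a j r)
          (dotProduct (a i)
            ((Matrix.of (fun l r =>
              ∑' n, B n ((pt i).2 - (pt j).2) l r *
                jacobiP α α n ⟪((pt i).1 : EucSp d), ((pt j).1 : EucSp d)⟫)
              : Matrix (Fin m) (Fin m) ℝ).mulVec (a j))) := by
      intro i j
      have h1 : ∀ l r : Fin m,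
          HasSum (fun n => a i l *
              (B n ((pt i).2 - (pt j).2) l r *
                jacobiP α α n ⟪((pt i).1 : EucSp d), ((pt j).1 : EucSp d)⟫) * a j r)
            (a i l * (∑' n, B n ((pt i).2 - (pt j).2) l r *
                jacobiP α α n ⟪((pt i).1 : EucSp d), ((pt j).1 : EucSp d)⟫) * a j r) :=
        fun l r => (((hsum (pt i) (pt j) l r).of_abs).hasSum.mul_left (a i l)).mul_right (a j r)
      have h2 := hasSum_sum (s := Finset.univ)
        (fun l _ => hasSum_sum (s := Finset.univ) (fun r _ => h1 l r))
      have e : dotProduct (a i)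
          ((Matrix.of (fun l r =>
            ∑' n, B n ((pt i).2 - (pt j).2) l r *
              jacobiP α α n ⟪((pt i).1 : EucSp d), ((pt j).1 : EucSp d)⟫)
            : Matrix (Fin m) (Fin m) ℝ).mulVec (a j))
          = ∑ l, ∑ r, a i l * (∑' n, B n ((pt i).2 - (pt j).2) l r *
              jacobiP α α n ⟪((pt i).1 : EucSp d), ((pt j).1 : EucSp d)⟫) * a j r := by
        rw [dpe]
        simp only [Matrix.of_apply]
      rw [e]
      exact h2
    have htot := hasSum_sum (s := Finset.univ)
      (fun i _ => hasSum_sum (s := Finset.univ) (fun j _ => hentry i j))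
    rw [← htot.tsum_eq]
    refine tsum_nonneg fun n => ?_
    have hMpos : ∀ c : Fin k → ℝ, 0 ≤ ∑ i, ∑ j, c i * c j *
        (dotProduct (a i) ((B n ((pt i).2 - (pt j).2)).mulVec (a j))) := by
      intro c
      have h := (hB n).2 k (fun i => (pt i).2) (fun i => c i • a i)
      calc (0:ℝ) ≤ ∑ i, ∑ j, dotProduct (c i • a i)
            ((B n ((pt i).2 - (pt j).2)).mulVec (c j • a j)) := h
        _ = ∑ i, ∑ j, c i * c j *
            (dotProduct (a i) ((B n ((pt i).2 - (pt j).2)).mulVec (a j))) := by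
          refine Finset.sum_congr rfl fun i _ => Finset.sum_congr rfl fun j _ => ?_
          rw [Matrix.mulVec_smul, smul_dotProduct, dotProduct_smul,
              smul_eq_mul, smul_eq_mul]
          ring
    have base := jacobi_kernel_psd (N := d+1) n α hN hA
      (fun i => (fun l => ((pt i).1 : EucSp d) l)) (fun i => hdot_self _)
      (fun i j => dotProduct (a i) ((B n ((pt i).2 - (pt j).2)).mulVec (a j))) hMpos
    have e : ∑ i, ∑ j, ∑ l, ∑ r, a i l *
        (B n ((pt i).2 - (pt j).2) l r *
          jacobiP α α n ⟪((pt i).1 : EucSp d), ((pt j).1 : EucSp d)⟫) * a j r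
        = ∑ i, ∑ j, (dotProduct (a i) ((B n ((pt i).2 - (pt j).2)).mulVec (a j))) *
            jacobiP α α n (dot (N := d+1)
              (fun l => ((pt i).1 : EucSp d) l) (fun l => ((pt j).1 : EucSp d) l)) := by
      refine Finset.sum_congr rfl fun i _ => Finset.sum_congr rfl fun j _ => ?_
      rw [← inner_eq_dot, dpe, Finset.sum_mul]
      refine Finset.sum_congr rfl fun l _ => ?_
      rw [Finset.sum_mul]
      refine Finset.sum_congr rfl fun r _ => by ring
    rw [e]
    exact base
end
end

section
/- For every real α > −1, every n ∈ ℕ, and every real y: P_{2n}^{(α,α)}(y)·P_n^{(α,−1/2)}(1) = P_n^{(α,−1/2)}(2y²−1)·P_{2n}^{(α,α)}(1). Equivalently, in terms of the normalised Jacobi polynomials R_n^{(α,β)}(x) = P_n^{(α,β)}(x)/P_n^{(α,β)}(1), one has R_{2n}^{(α,α)}(cos(θ/2)) = R_n^{(α,−1/2)}(cos θ) for all real θ. -/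
open scoped BigOperators
open Finset

noncomputable section

def pochR (x : ℝ) (m : ℕ) : ℝ := ∏ i ∈ Finset.range m, (x + i)

lemma pochR_zero (x : ℝ) : pochR x 0 = 1 := by simp [pochR]

lemma pochR_succ (x : ℝ) (m : ℕ) : pochR x (m+1) = pochR x m * (x + m) := by
  simp [pochR, Finset.prod_range_succ]

lemma pochR_succ' (x : ℝ) (m : ℕ) : pochR x (m+1) = x * pochR (x+1) m := by
  rw [pochR, Finset.prod_range_succ']
  simp only [Nat.cast_zero, add_zero]
  rw [mul_comm]
  congr 1
  apply Finset.prod_congr rfl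
  intro i _
  push_cast
  ring

lemma pochR_add (x : ℝ) (s t : ℕ) : pochR x (s+t) = pochR x s * pochR (x+s) t := by
  rw [pochR, Finset.prod_range_add]
  congr 1
  apply Finset.prod_congr rfl
  intro i _
  push_cast
  ring

lemma pochR_pos {x : ℝ} (hx : 0 < x) (m : ℕ) : 0 < pochR x m := by
  apply Finset.prod_pos
  intro i _
  positivity

lemma pochR_two (x : ℝ) (q : ℕ) : pochR x (q+2) = x * (pochR (x+1) q * (x+1+q)) := by
  rw [show q+2 = (q+1)+1 from rfl, pochR_succ', pochR_succ]

lemma hrel1 (j q : ℕ) :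
    ((q:ℝ)+2) * (j.choose (q+2) : ℝ) = ((j:ℝ)-(q+1)) * (j.choose (q+1) : ℝ) := by
  rcases Nat.lt_or_ge j (q+1) with h | h
  · rw [Nat.choose_eq_zero_of_lt (by omega), Nat.choose_eq_zero_of_lt (by omega)]
    ring
  · have hc : ((j.choose (q+1+1) * (q+1+1) : ℕ) : ℝ) = ((j.choose (q+1) * (j - (q+1)) : ℕ) : ℝ) := by
      exact_mod_cast congrArg (fun t : ℕ => (t : ℝ)) (Nat.choose_succ_right_eq j (q+1))
    push_cast [Nat.cast_sub h] at hc
    linarith [hc]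

lemma hrel2 (j q : ℕ) :
    ((j:ℝ)+1) * (j.choose (q+1) : ℝ) = ((j:ℝ)-q) * ((j+1).choose (q+1) : ℝ) := by
  rcases Nat.lt_or_ge j q with h | h
  · rw [Nat.choose_eq_zero_of_lt (by omega), Nat.choose_eq_zero_of_lt (by omega)]
    ring
  · have hc1 : ((Nat.succ j * j.choose (q+1) : ℕ) : ℝ)
        = (((j+1).choose (q+1+1) * (q+1+1) : ℕ) : ℝ) := by
      exact_mod_cast congrArg (fun t : ℕ => (t : ℝ)) (Nat.add_one_mul_choose_eq j (q+1))
    have hc2 : (((j+1).choose (q+1+1) * (q+1+1) : ℕ) : ℝ)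
        = (((j+1).choose (q+1) * ((j+1) - (q+1)) : ℕ) : ℝ) := by
      exact_mod_cast congrArg (fun t : ℕ => (t : ℝ)) (Nat.choose_succ_right_eq (j+1) (q+1))
    have hs : ((j+1) - (q+1) : ℕ) = j - q := by omega
    rw [hs] at hc2
    push_cast [Nat.cast_sub h] at hc1 hc2
    nlinarith [hc1, hc2]

lemma hrel3 (n j : ℕ) :
    ((j:ℝ)+1) * (n.choose (j+1) : ℝ) = ((n:ℝ)-j) * (n.choose j : ℝ) := by
  rcases Nat.lt_or_ge n j with h | h
  · rw [Nat.choose_eq_zero_of_lt (by omega), Nat.choose_eq_zero_of_lt (by omega)]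
    ring
  · have hc : ((n.choose (j+1) * (j+1) : ℕ) : ℝ) = ((n.choose j * (n - j) : ℕ) : ℝ) := by
      exact_mod_cast congrArg (fun t : ℕ => (t : ℝ)) (Nat.choose_succ_right_eq n j)
    push_cast [Nat.cast_sub h] at hc
    linarith [hc]

lemma pochR_one (x : ℝ) : pochR x 1 = x := by simp [pochR]

def Tm (n : ℕ) (c : ℝ) (k j : ℕ) : ℝ :=
  (n.choose j : ℝ) * (j.choose (k-j) : ℝ) * 4^j * pochR c j * pochR (c - n + 1/2 + j) (k-j)

def gm (n : ℕ) (c : ℝ) (k j : ℕ) : ℝ :=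
  (2*(j:ℝ) - k - 1) * ((n:ℝ) - c + 1/2 - (j:ℝ)) * (n.choose j : ℝ) * (j.choose (k-j+1) : ℝ) *
    4^j * pochR c j * pochR (c - n + 1/2 + j) (k-j)

lemma step_main (n j k : ℕ) (hjk : j < k) (c : ℝ) :
    ((k:ℝ)+1) * Tm n c (k+1) j - (2*(n:ℝ)-(k:ℝ))*(2*c+(k:ℝ)) * Tm n c k j
      = gm n c k (j+1) - gm n c k j := by
  obtain ⟨q, rfl⟩ : ∃ q, k = j + q + 1 := ⟨k - j - 1, by omega⟩
  simp only [Tm, gm]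
  rw [show j+q+1+1 - j = q+2 by omega,
      show j+q+1 - j + 1 = q+2 by omega,
      show j+q+1 - (j+1) + 1 = q+1 by omega,
      show j+q+1 - j = q+1 by omega,
      show j+q+1 - (j+1) = q by omega]
  push_cast
  rw [show c - (n:ℝ) + 1/2 + ((j:ℝ)+1) = (c - (n:ℝ) + 1/2 + (j:ℝ)) + 1 by ring,
      pochR_two (c - (n:ℝ) + 1/2 + (j:ℝ)) q,
      pochR_succ' (c - (n:ℝ) + 1/2 + (j:ℝ)) q,
      pochR_succ c j]
  apply mul_left_cancel₀ (show ((((q:ℝ)+2)*((j:ℝ)+1)) : ℝ) ≠ 0 by positivity)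
  linear_combination (((-(2*(n:ℝ) - ((j:ℝ)+(q:ℝ)+1)) * (2*c + ((j:ℝ)+(q:ℝ)+1)) * (c - (n:ℝ) + 1/2 + (j:ℝ)))*((q:ℝ)+2) + (((j:ℝ)+(q:ℝ)+2) * (c - (n:ℝ) + 1/2 + (j:ℝ)) * ((c - (n:ℝ) + 1/2 + (j:ℝ)) + (q:ℝ) + 1) + ((j:ℝ)-(q:ℝ)-2) * ((n:ℝ) - c + 1/2 - (j:ℝ)) * (c - (n:ℝ) + 1/2 + (j:ℝ)))*((j:ℝ)-(q:ℝ)-1)) * (n.choose j : ℝ) * (4^j * pochR c j * pochR ((c - (n:ℝ) + 1/2 + (j:ℝ)) + 1) q)) * (hrel2 j q) + ((((j:ℝ)+(q:ℝ)+2) * (c - (n:ℝ) + 1/2 + (j:ℝ)) * ((c - (n:ℝ) + 1/2 + (j:ℝ)) + (q:ℝ) + 1) + ((j:ℝ)-(q:ℝ)-2) * ((n:ℝ) - c + 1/2 - (j:ℝ)) * (c - (n:ℝ) + 1/2 + (j:ℝ)))*((j:ℝ)+1) * (n.choose j : ℝ) * (4^j * pochR c j * pochR ((c - (n:ℝ)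 + 1/2 + (j:ℝ)) + 1) q)) * (hrel1 j q) + ((-4 * ((j:ℝ)-(q:ℝ)) * ((n:ℝ) - c - 1/2 - (j:ℝ)) * (c + (j:ℝ)))*((q:ℝ)+2) * (((j+1).choose (q+1) : ℕ) : ℝ) * (4^j * pochR c j * pochR ((c - (n:ℝ) + 1/2 + (j:ℝ)) + 1) q)) * (hrel3 n j)

lemma step_bdry (n k : ℕ) (c : ℝ) :
    ((k:ℝ)+1) * Tm n c (k+1) k - (2*(n:ℝ)-(k:ℝ))*(2*c+(k:ℝ)) * Tm n c k k
      = (-((k:ℝ)+1)) * Tm n c (k+1) (k+1) - gm n c k k := by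
  simp only [Tm, gm]
  rw [show k+1-k = 1 by omega, show k+1-(k+1) = 0 by omega,
      show k-k+1 = 1 by omega, show k-k = 0 by omega]
  simp only [pochR_one, pochR_zero, Nat.choose_zero_right, Nat.choose_one_right, Nat.cast_one]
  rw [pochR_succ c k]
  push_cast
  linear_combination (4*(c+(k:ℝ))*4^k*pochR c k) * (hrel3 n k)

lemma sum_D_zero (n k : ℕ) (c : ℝ) :
    ∑ j ∈ Finset.range (k+2),
      (((k:ℝ)+1) * Tm n c (k+1) j
        - (2*(n:ℝ)-(k:ℝ))*(2*c+(k:ℝ)) * (if j ≤ k then Tm n c k j else 0)) = 0 := by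
  set Gg : ℕ → ℝ := fun j =>
    if j ≤ k then gm n c k j
    else if j = k+1 then -((k:ℝ)+1) * Tm n c (k+1) (k+1) else 0 with hGg
  have htel : ∀ j ∈ Finset.range (k+2),
      ((k:ℝ)+1) * Tm n c (k+1) j
        - (2*(n:ℝ)-(k:ℝ))*(2*c+(k:ℝ)) * (if j ≤ k then Tm n c k j else 0)
      = Gg (j+1) - Gg j := by
    intro j hj
    simp only [Finset.mem_range] at hj
    rcases lt_trichotomy j k with h | h | h
    · have h1 : j ≤ k := le_of_lt h
      have h2 : j + 1 ≤ k := h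
      simp only [hGg]
      rw [if_pos h1, if_pos h2, if_pos h1]
      exact step_main n j k h c
    · subst h
      have h1 : j ≤ j := le_refl j
      have h2 : ¬ (j + 1 ≤ j) := by omega
      simp only [hGg]
      rw [if_true, if_neg h2, if_pos h1, if_pos h1]
      exact step_bdry n j c
    · have hj1 : j = k + 1 := by omega
      subst hj1
      have h1 : ¬ (k + 1 ≤ k) := by omega
      have h2 : ¬ (k + 1 + 1 ≤ k) := by omega
      have h3 : ¬ (k + 1 + 1 = k + 1) := by omega
      simp only [hGg]
      rw [if_neg h2, if_neg h3, if_neg h1, if_true, if_neg h1]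
      ring
  rw [Finset.sum_congr rfl htel, Finset.sum_range_sub]
  have h0 : Gg 0 = 0 := by
    have h1 : (0:ℕ) ≤ k := Nat.zero_le k
    simp only [hGg, if_pos h1, gm]
    rw [show k - 0 + 1 = k+1 by omega]
    simp [Nat.choose_eq_zero_of_lt (Nat.succ_pos k)]
  have htop : Gg (k+2) = 0 := by
    have h1 : ¬ (k + 2 ≤ k) := by omega
    have h2 : ¬ (k + 2 = k + 1) := by omega
    simp only [hGg, if_neg h1, if_neg h2]
  rw [h0, htop]
  ring

lemma key (n : ℕ) (c : ℝ) (k : ℕ) :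
    ∑ j ∈ Finset.range (k+1), Tm n c k j = ((2*n).choose k : ℝ) * pochR (2*c) k := by
  induction k with
  | zero => simp [Tm, pochR_zero]
  | succ k ih =>
    have hD := sum_D_zero n k c
    rw [Finset.sum_sub_distrib, ← Finset.mul_sum, ← Finset.mul_sum] at hD
    have hsplit : ∑ j ∈ Finset.range (k+2), (if j ≤ k then Tm n c k j else 0)
        = ∑ j ∈ Finset.range (k+1), Tm n c k j := by
      rw [Finset.sum_range_succ]
      have : ¬ (k + 1 ≤ k) := by omega
      rw [if_neg this, add_zero]
      apply Finset.sum_congr rfl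
      intro j hj
      simp only [Finset.mem_range] at hj
      rw [if_pos (by omega)]
    rw [hsplit, ih, sub_eq_zero] at hD
    have hch : ((k:ℝ)+1) * ((2*n).choose (k+1) : ℝ)
        = (2*(n:ℝ)-(k:ℝ)) * ((2*n).choose k : ℝ) := by
      have := hrel3 (2*n) k
      push_cast at this ⊢
      linarith [this]
    apply mul_left_cancel₀ (show ((k:ℝ)+1) ≠ 0 by positivity)
    rw [hD, pochR_succ]
    linear_combination (-(pochR (2*c) k * (2*c+(k:ℝ)))) * hch

lemma Gamma_nat {x : ℝ} (hx : 0 < x) (m : ℕ) :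
    Real.Gamma (x + m) = Real.Gamma x * pochR x m := by
  induction m with
  | zero => simp [pochR_zero]
  | succ m ih =>
    have hzx : x + (m:ℝ) ≠ 0 := by positivity
    rw [show x + ((m+1 : ℕ):ℝ) = (x + (m:ℝ)) + 1 by push_cast; ring,
        Real.Gamma_add_one hzx, ih, pochR_succ]
    ring

def Asum (α : ℝ) (n : ℕ) (u : ℝ) : ℝ :=
  ∑ k ∈ Finset.range (2*n+1),
    ((2*n).choose k : ℝ) * (pochR (2*α+2*(n:ℝ)+1) k / pochR (α+1) k) * u^k

def Bsum (α : ℝ) (n : ℕ) (v : ℝ) : ℝ :=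
  ∑ j ∈ Finset.range (n+1),
    (n.choose j : ℝ) * (pochR (α+(n:ℝ)+1/2) j / pochR (α+1) j) * v^j

lemma Asum_zero (α : ℝ) (n : ℕ) : Asum α n 0 = 1 := by
  rw [Asum, Finset.sum_eq_single_of_mem 0 (by simp)]
  · simp [pochR_zero]
  · intro k _ hk0
    simp [zero_pow hk0]

lemma Bsum_zero (α : ℝ) (n : ℕ) : Bsum α n 0 = 1 := by
  rw [Bsum, Finset.sum_eq_single_of_mem 0 (by simp)]
  · simp [pochR_zero]
  · intro k _ hk0
    simp [zero_pow hk0]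

lemma jacobiP_aa (α : ℝ) (hα : -1 < α) (n : ℕ) (hn : n ≠ 0) (y : ℝ) :
    jacobiP α α (2*n) y
      = Real.Gamma (α+2*(n:ℝ)+1) / (((2*n).factorial : ℝ) * Real.Gamma (α+1))
        * Asum α n ((y-1)/2) := by
  have hn1 : (1:ℝ) ≤ (n:ℝ) := by exact_mod_cast Nat.one_le_iff_ne_zero.2 hn
  have hA1 : (0:ℝ) < α + 1 := by linarith
  have h2 : (0:ℝ) < 2*α+2*(n:ℝ)+1 := by linarith
  have hG1 : Real.Gamma (α+1) ≠ 0 := (Real.Gamma_pos_of_pos hA1).ne'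
  have hG2 : Real.Gamma (2*α+2*(n:ℝ)+1) ≠ 0 := (Real.Gamma_pos_of_pos h2).ne'
  rw [jacobiP, Asum]
  have hterm : ∀ k ∈ Finset.range (2*n+1),
      ((2*n).choose k : ℝ) * (Real.Gamma (α+α+((2*n:ℕ):ℝ)+(k:ℝ)+1) / Real.Gamma (α+(k:ℝ)+1))
          * ((y-1)/2)^k
      = (Real.Gamma (2*α+2*(n:ℝ)+1) / Real.Gamma (α+1)) *
        (((2*n).choose k : ℝ) * (pochR (2*α+2*(n:ℝ)+1) k / pochR (α+1) k) * ((y-1)/2)^k) := by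
    intro k _
    rw [show α+α+((2*n:ℕ):ℝ)+(k:ℝ)+1 = (2*α+2*(n:ℝ)+1)+(k:ℝ) by push_cast; ring,
        show α+(k:ℝ)+1 = (α+1)+(k:ℝ) by ring,
        Gamma_nat h2 k, Gamma_nat hA1 k]
    have hp : pochR (α+1) k ≠ 0 := (pochR_pos hA1 k).ne'
    field_simp
  rw [Finset.sum_congr rfl hterm, ← Finset.mul_sum]
  rw [show α+α+((2*n:ℕ):ℝ)+1 = 2*α+2*(n:ℝ)+1 by push_cast; ring,
      show α+((2*n:ℕ):ℝ)+1 = α+2*(n:ℝ)+1 by push_cast; ring]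
  have hf : (((2*n).factorial : ℕ) : ℝ) ≠ 0 := by positivity
  field_simp
  ring_nf
  ring_nf at hG2
  field_simp

lemma jacobiP_ah (α : ℝ) (hα : -1 < α) (n : ℕ) (hn : n ≠ 0) (x : ℝ) :
    jacobiP α (-(1/2)) n x
      = Real.Gamma (α+(n:ℝ)+1) / ((n.factorial : ℝ) * Real.Gamma (α+1))
        * Bsum α n ((x-1)/2) := by
  have hn1 : (1:ℝ) ≤ (n:ℝ) := by exact_mod_cast Nat.one_le_iff_ne_zero.2 hn
  have hA1 : (0:ℝ) < α + 1 := by linarith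
  have h2 : (0:ℝ) < α+(n:ℝ)+1/2 := by linarith
  have hG1 : Real.Gamma (α+1) ≠ 0 := (Real.Gamma_pos_of_pos hA1).ne'
  have hG2 : Real.Gamma (α+(n:ℝ)+1/2) ≠ 0 := (Real.Gamma_pos_of_pos h2).ne'
  rw [jacobiP, Bsum]
  have hterm : ∀ k ∈ Finset.range (n+1),
      (n.choose k : ℝ) * (Real.Gamma (α+(-(1/2))+((n:ℕ):ℝ)+(k:ℝ)+1) / Real.Gamma (α+(k:ℝ)+1))
          * ((x-1)/2)^k
      = (Real.Gamma (α+(n:ℝ)+1/2) / Real.Gamma (α+1)) *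
        ((n.choose k : ℝ) * (pochR (α+(n:ℝ)+1/2) k / pochR (α+1) k) * ((x-1)/2)^k) := by
    intro k _
    rw [show α+(-(1/2))+((n:ℕ):ℝ)+(k:ℝ)+1 = (α+(n:ℝ)+1/2)+(k:ℝ) by ring,
        show α+(k:ℝ)+1 = (α+1)+(k:ℝ) by ring,
        Gamma_nat h2 k, Gamma_nat hA1 k]
    have hp : pochR (α+1) k ≠ 0 := (pochR_pos hA1 k).ne'
    field_simp
  rw [Finset.sum_congr rfl hterm, ← Finset.mul_sum]
  rw [show α+(-(1/2))+((n:ℕ):ℝ)+1 = α+(n:ℝ)+1/2 by ring]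
  have hf : ((n.factorial : ℕ) : ℝ) ≠ 0 := by positivity
  rw [← mul_assoc]
  congr 1
  rw [div_mul_div_comm,
      show Real.Gamma (α+(n:ℝ)+1) * Real.Gamma (α+(n:ℝ)+1/2)
          = Real.Gamma (α+(n:ℝ)+1/2) * Real.Gamma (α+(n:ℝ)+1) by ring,
      show ((n.factorial : ℕ) : ℝ) * Real.Gamma (α+(n:ℝ)+1/2) * Real.Gamma (α+1)
          = Real.Gamma (α+(n:ℝ)+1/2) * (((n.factorial : ℕ) : ℝ) * Real.Gamma (α+1)) by ring,
      mul_div_mul_left _ _ hG2]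

lemma reindex (n : ℕ) (g : ℕ → ℝ) (hg : ∀ j, n < j → g j = 0) (u : ℝ) :
    ∑ k ∈ Finset.range (2*n+1), ∑ j ∈ Finset.range (k+1), g j * (j.choose (k-j) : ℝ) * u^k
      = ∑ j ∈ Finset.range (n+1), g j * ∑ i ∈ Finset.range (j+1), (j.choose i : ℝ) * u^(j+i) := by
  have h1 : ∀ k ∈ Finset.range (2*n+1),
      ∑ j ∈ Finset.range (k+1), g j * (j.choose (k-j) : ℝ) * u^k
      = ∑ j ∈ Finset.range (2*n+1), if j ≤ k then g j * (j.choose (k-j) : ℝ) * u^k else 0 := by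
    intro k hk
    simp only [Finset.mem_range] at hk
    rw [← Finset.sum_filter]
    congr 1
    ext x
    simp only [Finset.mem_filter, Finset.mem_range]
    omega
  rw [Finset.sum_congr rfl h1, Finset.sum_comm]
  have h2 : ∀ j ∈ Finset.range (2*n+1),
      (∑ k ∈ Finset.range (2*n+1), if j ≤ k then g j * (j.choose (k-j) : ℝ) * u^k else 0)
      = ∑ i ∈ Finset.range (2*n+1-j), g j * (j.choose i : ℝ) * u^(j+i) := by
    intro j hj
    rw [← Finset.sum_filter]
    have hfil : (Finset.range (2*n+1)).filter (fun k => j ≤ k) = Finset.Ico j (2*n+1) := by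
      ext x
      simp only [Finset.mem_filter, Finset.mem_range, Finset.mem_Ico]
      omega
    rw [hfil, Finset.sum_Ico_eq_sum_range]
    apply Finset.sum_congr rfl
    intro i _
    rw [show j + i - j = i by omega]
  rw [Finset.sum_congr rfl h2]
  rw [← Finset.sum_subset (Finset.range_subset_range.2 (by omega : n+1 ≤ 2*n+1))
      (by
        intro x hx hnx
        simp only [Finset.mem_range] at hx hnx
        have hxn : n < x := by omega
        apply Finset.sum_eq_zero
        intro i _
        rw [hg x hxn]
        ring)]
  apply Finset.sum_congr rfl
  intro j hj
  simp only [Finset.mem_range] at hj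
  rw [← Finset.sum_subset (Finset.range_subset_range.2 (by omega : j+1 ≤ 2*n+1-j))
      (by
        intro i hi hni
        simp only [Finset.mem_range] at hi hni
        rw [Nat.choose_eq_zero_of_lt (by omega : j < i)]
        push_cast
        ring)]
  rw [Finset.mul_sum]
  apply Finset.sum_congr rfl
  intro i _
  ring

lemma AB (α : ℝ) (hα : -1 < α) (n : ℕ) (u : ℝ) :
    Asum α n u = Bsum α n (4*(u^2+u)) := by
  have hA1 : (0:ℝ) < α + 1 := by linarith
  set c : ℝ := α+(n:ℝ)+1/2 with hc
  have h1 : ∀ k ∈ Finset.range (2*n+1),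
      ((2*n).choose k : ℝ) * (pochR (2*α+2*(n:ℝ)+1) k / pochR (α+1) k) * u^k
      = ∑ j ∈ Finset.range (k+1),
          (n.choose j : ℝ) * 4^j * pochR c j / pochR (α+1) j * (j.choose (k-j) : ℝ) * u^k := by
    intro k hk
    simp only [Finset.mem_range] at hk
    rw [show 2*α+2*(n:ℝ)+1 = 2*c by rw [hc]; ring]
    rw [show ((2*n).choose k : ℝ) * (pochR (2*c) k / pochR (α+1) k) * u^k
        = (((2*n).choose k : ℝ) * pochR (2*c) k) / pochR (α+1) k * u^k by ring]
    rw [← key n c k, Finset.sum_div, Finset.sum_mul]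
    apply Finset.sum_congr rfl
    intro j hj
    simp only [Finset.mem_range] at hj
    rw [Tm]
    rw [show c - (n:ℝ) + 1/2 = α+1 by rw [hc]; ring]
    have hsplitp : pochR (α+1) k = pochR (α+1) j * pochR (α+1+(j:ℝ)) (k-j) := by
      rw [← pochR_add]
      congr 1
      omega
    rw [hsplitp]
    have hja : (0:ℝ) < α+1+(j:ℝ) := by positivity
    have hq : pochR (α+1+(j:ℝ)) (k-j) ≠ 0 := (pochR_pos hja _).ne'
    have hy : pochR (α+1) j ≠ 0 := (pochR_pos hA1 j).ne'
    field_simp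
  rw [Asum, Finset.sum_congr rfl h1,
      reindex n (fun j => (n.choose j : ℝ) * 4^j * pochR c j / pochR (α+1) j)
        (by
          intro j hj
          show (n.choose j : ℝ) * 4 ^ j * pochR c j / pochR (α + 1) j = 0
          rw [Nat.choose_eq_zero_of_lt hj]
          push_cast
          ring) u,
      Bsum]
  rw [show α+(n:ℝ)+1/2 = c from hc.symm]  -- may be no-op if `set` already abstracted
  apply Finset.sum_congr rfl
  intro j hj
  have hexp : ∑ i ∈ Finset.range (j+1), ((j.choose i : ℕ) : ℝ) * u^(j+i) = u^j * (u+1)^j := by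
    rw [add_pow u 1 j, Finset.mul_sum]
    apply Finset.sum_congr rfl
    intro i _
    ring
  rw [hexp, show (4*(u^2+u))^j = 4^j*(u^j*(u+1)^j) by
    rw [show 4*(u^2+u) = 4*(u*(u+1)) by ring, mul_pow, mul_pow]]
  ring

/-- Quadratic transformation for Jacobi polynomials:
`P_{2n}^{(α,α)}(y)·P_n^{(α,−1/2)}(1) = P_n^{(α,−1/2)}(2y²−1)·P_{2n}^{(α,α)}(1)`;
equivalently, `R_{2n}^{(α,α)}(cos(θ/2)) = R_n^{(α,−1/2)}(cos θ)` for the normalised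
Jacobi polynomials. -/
theorem jacobi_quadratic_transformation (α : ℝ) (hα : -1 < α) (n : ℕ) :
    (∀ y : ℝ,
      jacobiP α α (2 * n) y * jacobiP α (-(1 / 2)) n 1
        = jacobiP α (-(1 / 2)) n (2 * y ^ 2 - 1) * jacobiP α α (2 * n) 1) ∧
    (∀ θ : ℝ,
      jacobiP α α (2 * n) (Real.cos (θ / 2)) / jacobiP α α (2 * n) 1
        = jacobiP α (-(1 / 2)) n (Real.cos θ) / jacobiP α (-(1 / 2)) n 1) := by
  have hpart1 : ∀ y : ℝ,
      jacobiP α α (2 * n) y * jacobiP α (-(1 / 2)) n 1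
        = jacobiP α (-(1 / 2)) n (2 * y ^ 2 - 1) * jacobiP α α (2 * n) 1 := by
    intro y
    by_cases hn : n = 0
    · subst hn
      have h1 : jacobiP α α (2*0) y = jacobiP α α (2*0) 1 := by simp [jacobiP]
      have h2 : jacobiP α (-(1/2)) 0 (2*y^2-1) = jacobiP α (-(1/2)) 0 1 := by simp [jacobiP]
      rw [h1, h2]
      ring
    · rw [jacobiP_aa α hα n hn y, jacobiP_aa α hα n hn 1,
          jacobiP_ah α hα n hn (2*y^2-1), jacobiP_ah α hα n hn 1]
      rw [show ((1:ℝ)-1)/2 = 0 by norm_num, Asum_zero, Bsum_zero]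
      rw [show (2*y^2-1-1)/2 = 4*(((y-1)/2)^2+((y-1)/2)) by ring]
      rw [← AB α hα n ((y-1)/2)]
      ring
  refine ⟨hpart1, ?_⟩
  intro θ
  by_cases hn : n = 0
  · subst hn
    have h1 : jacobiP α α (2*0) (Real.cos (θ/2)) = jacobiP α α (2*0) 1 := by simp [jacobiP]
    have h2 : jacobiP α (-(1/2)) 0 (Real.cos θ) = jacobiP α (-(1/2)) 0 1 := by simp [jacobiP]
    rw [h1, h2]
    by_cases hhalf : α = -(1/2)
    · rw [hhalf]
    · have hA1 : (0:ℝ) < α + 1 := by linarith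
      have hGa : Real.Gamma (α+1) ≠ 0 := (Real.Gamma_pos_of_pos hA1).ne'
      have heval : ∀ b : ℝ, Real.Gamma (α+b+1) ≠ 0 → jacobiP α b 0 1 = 1 := by
        intro b hb
        rw [jacobiP]
        simp only [Nat.cast_zero, add_zero, Nat.factorial_zero, Nat.cast_one, one_mul,
          Finset.sum_range_one, Nat.choose_self, pow_zero, mul_one]
        field_simp
        simp [hGa]
        exact mul_div_cancel₀ _ hGa
      have hg1 : Real.Gamma (α+α+1) ≠ 0 := by
        apply Real.Gamma_ne_zero
        intro m
        match m with
        | 0 =>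
          simp only [Nat.cast_zero, neg_zero]
          intro hcon
          apply hhalf
          linarith
        | (m+1) =>
          have : (0:ℝ) < (m:ℝ) + 1 := by positivity
          push_cast
          intro hcon
          linarith
      have hg2 : Real.Gamma (α+(-(1/2))+1) ≠ 0 := by
        apply Real.Gamma_ne_zero
        intro m
        match m with
        | 0 =>
          simp only [Nat.cast_zero, neg_zero]
          intro hcon
          apply hhalf
          linarith
        | (m+1) =>
          have : (0:ℝ) < (m:ℝ) + 1 := by positivity
          push_cast
          intro hcon
          linarith
      rw [show (2*0 : ℕ) = 0 from rfl, heval α hg1, heval (-(1/2)) hg2]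
  · have hn1 : (1:ℝ) ≤ (n:ℝ) := by exact_mod_cast Nat.one_le_iff_ne_zero.2 hn
    have hA1 : (0:ℝ) < α + 1 := by linarith
    have hQ2 : 0 < jacobiP α α (2*n) 1 := by
      rw [jacobiP_aa α hα n hn 1, show ((1:ℝ)-1)/2 = 0 by norm_num, Asum_zero, mul_one]
      have h2n : (0:ℝ) < α+2*(n:ℝ)+1 := by linarith
      exact div_pos (Real.Gamma_pos_of_pos h2n)
        (mul_pos (by exact_mod_cast Nat.factorial_pos (2*n)) (Real.Gamma_pos_of_pos hA1))
    have hQ1 : 0 < jacobiP α (-(1/2)) n 1 := by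
      rw [jacobiP_ah α hα n hn 1, show ((1:ℝ)-1)/2 = 0 by norm_num, Bsum_zero, mul_one]
      have hnn : (0:ℝ) < α+(n:ℝ)+1 := by linarith
      exact div_pos (Real.Gamma_pos_of_pos hnn)
        (mul_pos (by exact_mod_cast Nat.factorial_pos n) (Real.Gamma_pos_of_pos hA1))
    rw [div_eq_div_iff hQ2.ne' hQ1.ne']
    have h := hpart1 (Real.cos (θ/2))
    have hcs : 2*(Real.cos (θ/2))^2 - 1 = Real.cos θ := by
      have hc := Real.cos_sq (θ/2)
      rw [show 2*(θ/2) = θ by ring] at hc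
      linarith [hc]
    rw [hcs] at h
    exact h
end
end
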